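/- arXiv:0902.4741 — 4 statements merged into one kernel-verified Lean document; each statement's English description precedes it below -/
import Mathlib

section
/- Let a: [0,∞) → ℝ be locally integrable and y₀ ≥ 0. Then every w ∈ S(a, y₀) satisfies w(t) ≤ √y₀ + ∫₀ᵗ a⁻(s) ds for every t ≥ 0, where a⁻(s) := max(−a(s), 0) denotes the negative part of a. -/
open MeasureTheory Set Filter

/-- `a` is locally integrable on `[0,∞)`. -/
def LocIntOn (a : ℝ → ℝ) : Prop :=
  ∀ t : ℝ, 0 ≤ t → MeasureTheory.IntegrableOn a (Set.Icc 0 t) MeasureTheory.volume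

/-- `y` is a nonnegative global solution of the Cauchy problem
`y' + 2 a √y = 0`, `y 0 = y₀`, in integral form. -/
def IsSol (a : ℝ → ℝ) (y₀ : ℝ) (y : ℝ → ℝ) : Prop :=
  ContinuousOn y (Set.Ici 0) ∧ (∀ t : ℝ, 0 ≤ t → 0 ≤ y t) ∧
    ∀ t : ℝ, 0 ≤ t → y t = y₀ - 2 * ∫ s in (0:ℝ)..t, a s * Real.sqrt (y s)

/-- Membership in the set `S(a, y₀)`. -/
def MemS (a : ℝ → ℝ) (y₀ : ℝ) (w : ℝ → ℝ) : Prop :=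
  (∀ t : ℝ, 0 ≤ t → 0 ≤ w t) ∧
    ∃ g : ℝ → ℝ,
      (∀ t : ℝ, 0 ≤ t → MeasureTheory.IntegrableOn g (Set.Icc 0 t) MeasureTheory.volume) ∧
      (∀ t : ℝ, 0 ≤ t → w t = Real.sqrt y₀ + ∫ s in (0:ℝ)..t, g s) ∧
      (∀ᵐ s ∂(MeasureTheory.volume : MeasureTheory.Measure ℝ), 0 ≤ s → 0 < w s → g s = -a s)

/-- `y` is the maximal nonnegative global solution. -/
def IsMaxSol (a : ℝ → ℝ) (y₀ : ℝ) (y : ℝ → ℝ) : Prop :=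
  IsSol a y₀ y ∧ ∀ z : ℝ → ℝ, IsSol a y₀ z → ∀ t : ℝ, 0 ≤ t → z t ≤ y t

theorem stmt9 (a : ℝ → ℝ) (y₀ : ℝ) (ha : LocIntOn a) (hy₀ : 0 ≤ y₀)
    (w : ℝ → ℝ) (hw : MemS a y₀ w) :
    ∀ t : ℝ, 0 ≤ t → w t ≤ Real.sqrt y₀ + ∫ s in (0:ℝ)..t, max (-a s) 0 := by
  obtain ⟨hwnn, g, hgint, hwe, hga⟩ := hw
  intro t ht
  have haI : IntegrableOn a (Icc 0 t) volume := ha t ht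
  have hgI : IntegrableOn g (Icc 0 t) volume := hgint t ht
  have hanI : IntegrableOn (fun s => max (-a s) 0) (Icc 0 t) volume := haI.neg.pos_part
  have hII : ∀ (f : ℝ → ℝ), IntegrableOn f (Icc 0 t) volume →
      ∀ u v : ℝ, u ∈ Icc 0 t → v ∈ Icc 0 t → IntervalIntegrable f volume u v := by
    intro f hf u v hu hv
    rw [intervalIntegrable_iff]
    refine hf.mono_set (uIoc_subset_uIcc.trans ?_)
    rw [← uIcc_of_le ht]
    exact uIcc_subset_uIcc (by rwa [uIcc_of_le ht]) (by rwa [uIcc_of_le ht])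
  have hmemt : t ∈ Icc 0 t := ⟨ht, le_refl t⟩
  have hmem0 : (0:ℝ) ∈ Icc 0 t := ⟨le_refl 0, ht⟩
  -- continuity of w on [0,t]
  have hwc : ContinuousOn w (Icc 0 t) := by
    have hprim : ContinuousOn (fun x => ∫ s in (0:ℝ)..x, g s) (Icc 0 t) := by
      have := intervalIntegral.continuousOn_primitive_interval
        (a := 0) (b := t) (f := g) (by rwa [uIcc_of_le ht])
      rwa [uIcc_of_le ht] at this
    exact (continuousOn_const.add hprim).congr fun x hx => hwe x hx.1
  -- nonnegativity of integrals of the positive part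
  have hanonneg : ∀ u v : ℝ, u ∈ Icc 0 t → v ∈ Icc 0 t → u ≤ v →
      0 ≤ ∫ s in u..v, max (-a s) 0 :=
    fun u v _ _ huv => intervalIntegral.integral_nonneg huv fun x _ => le_max_right _ _
  -- key step on an interval where w > 0
  have key : ∀ τ : ℝ, τ ∈ Icc 0 t → (∀ s ∈ Ioc τ t, 0 < w s) →
      (∫ s in τ..t, g s) ≤ ∫ s in (0:ℝ)..t, max (-a s) 0 := by
    intro τ hτ hpos
    have hτt : τ ≤ t := hτ.2
    have h1 : (∫ s in τ..t, g s) = ∫ s in τ..t, -a s := by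
      refine intervalIntegral.integral_congr_ae ?_
      filter_upwards [hga] with s hs hmem
      rw [uIoc_of_le hτt] at hmem
      exact hs (hτ.1.trans hmem.1.le) (hpos s hmem)
    have h2 : (∫ s in τ..t, -a s) ≤ ∫ s in τ..t, max (-a s) 0 :=
      intervalIntegral.integral_mono_on hτt (hII _ haI.neg τ t hτ hmemt)
        (hII _ hanI τ t hτ hmemt) fun x _ => le_max_left _ _
    have h3 : (∫ s in τ..t, max (-a s) 0) ≤ ∫ s in (0:ℝ)..t, max (-a s) 0 := by
      have := intervalIntegral.integral_add_adjacent_intervals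
        (hII _ hanI 0 τ hmem0 hτ) (hII _ hanI τ t hτ hmemt)
      linarith [hanonneg 0 τ hmem0 hτ hτ.1]
    linarith
  by_cases hz : ∃ s ∈ Icc 0 t, w s = 0
  · -- there is a zero of w; take the last one
    set E : Set ℝ := Icc 0 t ∩ w ⁻¹' {0} with hE
    have hEne : E.Nonempty := by obtain ⟨s, hs1, hs2⟩ := hz; exact ⟨s, hs1, hs2⟩
    have hEc : IsCompact E :=
      isCompact_Icc.of_isClosed_subset
        (hwc.preimage_isClosed_of_isClosed isClosed_Icc isClosed_singleton)
        inter_subset_left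
    set τ := sSup E with hτdef
    have hτE : τ ∈ E := hEc.sSup_mem hEne
    have hτmem : τ ∈ Icc 0 t := hτE.1
    have hτ0 : w τ = 0 := hτE.2
    have hpos : ∀ s ∈ Ioc τ t, 0 < w s := by
      intro s hs
      have hs0 : 0 ≤ s := hτmem.1.trans hs.1.le
      rcases (hwnn s hs0).lt_or_eq with h | h
      · exact h
      · exfalso
        have : s ∈ E := ⟨⟨hs0, hs.2⟩, h.symm⟩
        exact absurd (le_csSup hEc.bddAbove this) (not_le.mpr hs.1)
    have hsplit : w t = ∫ s in τ..t, g s := by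
      have ht' := hwe t ht
      have hτ' := hwe τ hτmem.1
      have hadd := intervalIntegral.integral_add_adjacent_intervals
        (hII _ hgI 0 τ hmem0 hτmem) (hII _ hgI τ t hτmem hmemt)
      rw [hτ0] at hτ'
      linarith
    have := key τ hτmem hpos
    have hsq : (0:ℝ) ≤ Real.sqrt y₀ := Real.sqrt_nonneg _
    linarith [hsplit ▸ this]
  · push_neg at hz
    have hpos : ∀ s ∈ Ioc (0:ℝ) t, 0 < w s := fun s hs =>
      ((hwnn s hs.1.le).lt_or_eq.resolve_right fun h => hz s ⟨hs.1.le, hs.2⟩ h.symm)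
    have := key 0 hmem0 hpos
    rw [hwe t ht]
    linarith
end

section
/- Let a: [0,∞) → ℝ be locally integrable, let y₀ > 0, and suppose a(t) ≤ K for almost every t ≥ 0, where K > 0. Then the maximal solution y of the Cauchy problem y' + 2a√y = 0, y(0) = y₀ satisfies y(t) > 0 and √(y(t)) = √y₀ − ∫₀ᵗ a(s) ds for every t ∈ [0, √y₀/K). -/
open MeasureTheory Set Filter Topology

set_option maxHeartbeats 1000000

theorem sq_primitive (f : ℝ → ℝ) (c d : ℝ) (hcd : c ≤ d)
    (hf : IntegrableOn f (Ioc c d) volume) :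
    (2:ℝ) * ∫ s in c..d, f s * ∫ u in c..s, f u = (∫ s in c..d, f s)^2 := by
  set μ := volume.restrict (Ioc c d) with hμ
  have hfi : Integrable f μ := hf
  set F : ℝ × ℝ → ℝ := fun z => f z.1 * f z.2 with hFdef
  have hF : Integrable F (μ.prod μ) := hfi.mul_prod hfi
  have hG : MeasurableSet {z : ℝ × ℝ | z.2 ≤ z.1} :=
    measurableSet_le measurable_snd measurable_fst
  have hF1 : Integrable ({z : ℝ × ℝ | z.2 ≤ z.1}.indicator F) (μ.prod μ) :=
    hF.indicator hG
  have hF2 : Integrable ({z : ℝ × ℝ | z.2 ≤ z.1}ᶜ.indicator F) (μ.prod μ) :=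
    hF.indicator hG.compl
  have key1 : ∫ z, {z : ℝ × ℝ | z.2 ≤ z.1}.indicator F z ∂(μ.prod μ)
      = ∫ s in Ioc c d, f s * ∫ u in c..s, f u := by
    rw [integral_prod _ hF1]
    refine setIntegral_congr_fun measurableSet_Ioc (fun s hs => ?_)
    have h1 : (fun u => {z : ℝ × ℝ | z.2 ≤ z.1}.indicator F (s, u))
        = (Iic s).indicator (fun u => f s * f u) := by
      funext u
      simp [Set.indicator_apply, F]
    rw [h1, setIntegral_indicator measurableSet_Iic]
    have h2 : Ioc c d ∩ Iic s = Ioc c s := by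
      rw [Ioc_inter_Iic, inf_eq_right.2 hs.2]
    rw [h2, intervalIntegral.integral_of_le hs.1.le, integral_const_mul]
  have key2 : ∫ z, {z : ℝ × ℝ | z.2 ≤ z.1}ᶜ.indicator F z ∂(μ.prod μ)
      = ∫ s in Ioc c d, f s * ∫ u in c..s, f u := by
    rw [integral_prod_symm _ hF2]
    refine setIntegral_congr_fun measurableSet_Ioc (fun u hu => ?_)
    have h1 : (fun s => {z : ℝ × ℝ | z.2 ≤ z.1}ᶜ.indicator F (s, u))
        = (Iio u).indicator (fun s => f s * f u) := by
      funext s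
      simp [Set.indicator_apply, F, not_le]
    rw [h1, setIntegral_indicator measurableSet_Iio]
    have h2 : Ioc c d ∩ Iio u = Ioo c u := by
      ext x
      constructor
      · rintro ⟨⟨hx1, _⟩, hx2⟩; exact ⟨hx1, hx2⟩
      · rintro ⟨hx1, hx2⟩; exact ⟨⟨hx1, hx2.le.trans hu.2⟩, hx2⟩
    rw [h2, ← integral_Ioc_eq_integral_Ioo, intervalIntegral.integral_of_le hu.1.le,
      integral_mul_const, mul_comm]
  have hsplit : ∫ z, F z ∂(μ.prod μ)
      = (∫ z, {z : ℝ × ℝ | z.2 ≤ z.1}.indicator F z ∂(μ.prod μ))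
        + ∫ z, {z : ℝ × ℝ | z.2 ≤ z.1}ᶜ.indicator F z ∂(μ.prod μ) := by
    rw [← integral_add hF1 hF2]
    congr 1
    funext z
    simp only [Set.indicator_apply, Set.mem_compl_iff, Set.mem_setOf_eq]
    split_ifs <;> first | simp | linarith
  have hprod : ∫ z, F z ∂(μ.prod μ) = (∫ s, f s ∂μ) * ∫ s, f s ∂μ :=
    integral_prod_mul f f
  rw [intervalIntegral.integral_of_le hcd, intervalIntegral.integral_of_le hcd]
  have := hsplit
  rw [hprod, key1, key2] at this
  rw [sq]
  rw [this]
  ring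

theorem step_sq (f : ℝ → ℝ) (c t : ℝ) (hct : c ≤ t)
    (hf : IntegrableOn f (Icc c t) volume) (x : ℝ) :
    (x - ∫ s in c..t, f s)^2
      = x^2 - 2 * ∫ s in c..t, f s * (x - ∫ u in c..s, f u) := by
  have hQcont : ContinuousOn (fun s => ∫ u in c..s, f u) (Icc c t) := by
    have h := intervalIntegral.continuousOn_primitive_interval
      (show IntegrableOn f (uIcc c t) volume by rwa [uIcc_of_le hct])
    rwa [uIcc_of_le hct] at h
  have hfQ : IntegrableOn (fun s => f s * ∫ u in c..s, f u) (Icc c t) volume :=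
    hf.mul_continuousOn hQcont isCompact_Icc
  have hfI : IntervalIntegrable f volume c t := by
    rw [intervalIntegrable_iff_integrableOn_Icc_of_le hct]; exact hf
  have hfQI : IntervalIntegrable (fun s => f s * ∫ u in c..s, f u) volume c t := by
    rw [intervalIntegrable_iff_integrableOn_Icc_of_le hct]; exact hfQ
  have hfxI : IntervalIntegrable (fun s => f s * x) volume c t := hfI.mul_const x
  have h1 : ∫ s in c..t, f s * (x - ∫ u in c..s, f u)
      = (∫ s in c..t, f s) * x - ∫ s in c..t, f s * ∫ u in c..s, f u := by
    have : (fun s => f s * (x - ∫ u in c..s, f u))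
        = fun s => f s * x - f s * ∫ u in c..s, f u := by
      funext s; ring
    rw [this, intervalIntegral.integral_sub hfxI hfQI, intervalIntegral.integral_mul_const]
  have h2 := sq_primitive f c t hct (hf.mono_set Ioc_subset_Icc_self)
  rw [h1]
  nlinarith [h2]

theorem stmt10 (a : ℝ → ℝ) (y₀ K : ℝ) (ha : LocIntOn a) (hy₀ : 0 < y₀) (hK : 0 < K)
    (haK : ∀ᵐ t ∂(MeasureTheory.volume : MeasureTheory.Measure ℝ), 0 ≤ t → a t ≤ K)
    (y : ℝ → ℝ) (hy : IsMaxSol a y₀ y) :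
    ∀ t : ℝ, 0 ≤ t → t < Real.sqrt y₀ / K →
      0 < y t ∧ Real.sqrt (y t) = Real.sqrt y₀ - ∫ s in (0:ℝ)..t, a s := by
  intro t0 ht0 ht0T
  obtain ⟨⟨hycont, hynn, hyeq⟩, -⟩ := hy
  set u : ℝ → ℝ := fun s => Real.sqrt (y s) with hu
  set A : ℝ → ℝ := fun s => ∫ x in (0:ℝ)..s, a x with hA
  set r : ℝ → ℝ := fun s => Real.sqrt y₀ - A s with hr
  set N : ℝ → ℝ := fun s => ∫ x in (0:ℝ)..s, |a x| with hN
  -- basic integrability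
  have haInt : IntegrableOn a (Icc 0 t0) volume := ha t0 ht0
  have haII : ∀ c d : ℝ, 0 ≤ c → c ≤ d → d ≤ t0 → IntervalIntegrable a volume c d := by
    intro c d h1 h2 h3
    apply IntegrableOn.intervalIntegrable
    refine haInt.mono_set ?_
    rw [uIcc_of_le h2]; exact Icc_subset_Icc h1 h3
  have haAbsII : ∀ c d : ℝ, 0 ≤ c → c ≤ d → d ≤ t0 → IntervalIntegrable (fun s => |a s|) volume c d :=
    fun c d h1 h2 h3 => (haII c d h1 h2 h3).abs
  -- β : uniform lower bound for r on [0, t0]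
  have hKt0 : K * t0 < Real.sqrt y₀ := by
    have := (lt_div_iff₀ hK).1 ht0T; linarith
  set β : ℝ := Real.sqrt y₀ - K * t0 with hβdef
  have hβ : 0 < β := by simp [hβdef]; linarith
  have hrpos : ∀ s ∈ Icc (0:ℝ) t0, β ≤ r s := by
    intro s hs
    have h1 : A s ≤ K * s := by
      have hmono : (∫ x in (0:ℝ)..s, a x) ≤ ∫ x in (0:ℝ)..s, (fun _ => K) x := by
        apply intervalIntegral.integral_mono_ae_restrict hs.1 (haII 0 s le_rfl hs.1 hs.2)
          intervalIntegrable_const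
        filter_upwards [ae_restrict_of_ae haK, ae_restrict_mem measurableSet_Icc] with x hx hxm
        exact hx hxm.1
      simpa [mul_comm] using hmono
    have h2 : K * s ≤ K * t0 := by nlinarith [hs.2]
    simp only [hr, hβdef]; linarith
  -- continuity facts on [0, t0]
  have hAcont : ContinuousOn A (Icc 0 t0) := by
    have h := intervalIntegral.continuousOn_primitive_interval
      (show IntegrableOn a (uIcc 0 t0) volume by rwa [uIcc_of_le ht0])
    rwa [uIcc_of_le ht0] at h
  have hrcont : ContinuousOn r (Icc 0 t0) := continuousOn_const.sub hAcont
  have hucont : ContinuousOn u (Icc 0 t0) :=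
    Real.continuous_sqrt.comp_continuousOn (hycont.mono (fun x hx => hx.1))
  have hNcont : ContinuousOn N (Icc 0 t0) := by
    have h := intervalIntegral.continuousOn_primitive_interval
      (show IntegrableOn (fun s => |a s|) (uIcc 0 t0) volume by rw [uIcc_of_le ht0]; exact haInt.abs)
    rwa [uIcc_of_le ht0] at h
  have hauInt : IntegrableOn (fun s => a s * u s) (Icc 0 t0) volume :=
    haInt.mul_continuousOn hucont isCompact_Icc
  have hauII : ∀ c d : ℝ, 0 ≤ c → c ≤ d → d ≤ t0 → IntervalIntegrable (fun s => a s * u s) volume c d := by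
    intro c d h1 h2 h3
    apply IntegrableOn.intervalIntegrable
    refine hauInt.mono_set ?_
    rw [uIcc_of_le h2]; exact Icc_subset_Icc h1 h3
  have hy0 : y 0 = y₀ := by simpa using hyeq 0 le_rfl
  have hyu : ∀ s : ℝ, 0 ≤ s → y s = u s ^ 2 := fun s hs => (Real.sq_sqrt (hynn s hs)).symm
  -- the invariant set
  set S : Set ℝ := {t | t ∈ Icc (0:ℝ) t0 ∧ ∀ s ∈ Icc (0:ℝ) t, 0 < y s ∧ u s = r s} with hS
  have h0S : (0:ℝ) ∈ S := by
    refine ⟨⟨le_rfl, ht0⟩, fun s hs => ?_⟩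
    have hs0 : s = 0 := le_antisymm hs.2 hs.1
    subst hs0
    constructor
    · rw [hy0]; exact hy₀
    · simp [hu, hr, hA, hy0]
  have hbdd : BddAbove S := ⟨t0, fun x hx => hx.1.2⟩
  set c := sSup S with hc
  have hc0 : 0 ≤ c := le_csSup hbdd h0S
  have hct0 : c ≤ t0 := csSup_le ⟨0, h0S⟩ (fun x hx => hx.1.2)
  have hcIcc : c ∈ Icc (0:ℝ) t0 := ⟨hc0, hct0⟩
  have hbefore : ∀ s : ℝ, 0 ≤ s → s < c → 0 < y s ∧ u s = r s := by
    intro s h1 h2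
    obtain ⟨x, hxS, hsx⟩ := exists_lt_of_lt_csSup ⟨0, h0S⟩ h2
    exact hxS.2 s ⟨h1, hsx.le⟩
  have hcS : ∀ s ∈ Icc (0:ℝ) c, 0 < y s ∧ u s = r s := by
    intro s hs
    rcases lt_or_eq_of_le hs.2 with h | h
    · exact hbefore s hs.1 h
    · rcases eq_or_lt_of_le hs.1 with h0 | h0
    -- if s = 0
      · exact h0 ▸ h0S.2 0 ⟨le_rfl, le_rfl⟩
      · -- s = c > 0 : take limits from the left
        have hne : (𝓝[Ico (0:ℝ) s] s).NeBot := by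
          apply mem_closure_iff_nhdsWithin_neBot.1
          rw [closure_Ico (ne_of_lt h0)]
          exact ⟨hs.1, le_rfl⟩
        have hsub : Ico (0:ℝ) s ⊆ Icc 0 t0 := fun x hx => ⟨hx.1, hx.2.le.trans (hs.2.trans hct0)⟩
        have hmem : s ∈ Icc (0:ℝ) t0 := ⟨hs.1, hs.2.trans hct0⟩
        have h1 : Tendsto u (𝓝[Ico (0:ℝ) s] s) (𝓝 (u s)) :=
          (hucont s hmem).mono hsub
        have h2 : Tendsto r (𝓝[Ico (0:ℝ) s] s) (𝓝 (r s)) :=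
          (hrcont s hmem).mono hsub
        have heq : u =ᶠ[𝓝[Ico (0:ℝ) s] s] r :=
          eventually_nhdsWithin_of_forall (fun x hx => (hbefore x hx.1 (lt_of_lt_of_le hx.2 h.le)).2)
        have hur : u s = r s := tendsto_nhds_unique (h1.congr' heq) h2
        refine ⟨?_, hur⟩
        have h3 : 0 < r s := lt_of_lt_of_le hβ (hrpos s hmem)
        rw [hyu s hs.1, hur]
        positivity
  -- the extension argument : c = t0
  have hcfull : c = t0 := by
    by_contra hne'
    have hlt : c < t0 := lt_of_le_of_ne hct0 hne'
    obtain ⟨δ, hδdef⟩ : ∃ x : ℝ, x = r c := ⟨_, rfl⟩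
    have hδ : 0 < δ := hδdef ▸ lt_of_lt_of_le hβ (hrpos c hcIcc)
    have huc : u c = δ := by rw [hδdef]; exact (hcS c ⟨hc0, le_rfl⟩).2
    -- eventually conditions near c within Icc 0 t0
    have hev : ∀ᶠ s in 𝓝[Icc (0:ℝ) t0] c, δ/2 < u s ∧ δ/2 < r s ∧ N s < N c + δ/8 := by
      have e1 : Tendsto u (𝓝[Icc (0:ℝ) t0] c) (𝓝 δ) := huc ▸ hucont c hcIcc
      have e2 : Tendsto r (𝓝[Icc (0:ℝ) t0] c) (𝓝 δ) := by
        rw [hδdef]; exact hrcont c hcIcc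
      have e3 : Tendsto N (𝓝[Icc (0:ℝ) t0] c) (𝓝 (N c)) := hNcont c hcIcc
      refine ((e1.eventually (eventually_gt_nhds (half_lt_self hδ))).and
        ((e2.eventually (eventually_gt_nhds (half_lt_self hδ))).and
          (e3.eventually (eventually_lt_nhds (lt_add_of_pos_right _ (by positivity : (0:ℝ) < δ/8)))))).mono ?_
      tauto
    rw [eventually_nhdsWithin_iff] at hev
    obtain ⟨ε', hε', hball⟩ := Metric.eventually_nhds_iff.1 hev
    set ε : ℝ := min (ε'/2) (t0 - c) with hεdef
    have hεpos : 0 < ε := lt_min (by linarith) (by linarith)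
    set d : ℝ := c + ε with hd
    have hcd : c ≤ d := by simp [hd]; linarith
    have hdt0 : d ≤ t0 := by
      have : ε ≤ t0 - c := min_le_right _ _
      simp [hd]; linarith
    have hIsub : Icc c d ⊆ Icc (0:ℝ) t0 := Icc_subset_Icc hc0 hdt0
    have hP : ∀ s ∈ Icc c d, δ/2 < u s ∧ δ/2 < r s ∧ N s < N c + δ/8 := by
      intro s hsI
      apply hball
      · rw [Real.dist_eq, abs_lt]
        have h1 : ε ≤ ε'/2 := min_le_left _ _
        constructor <;> [skip; skip] <;>
          · have := hsI.1; have := hsI.2; simp [hd] at *; linarith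
      · exact hIsub hsI
    -- integrability on [c, d]
    have haIcd : IntegrableOn a (Icc c d) volume := haInt.mono_set hIsub
    -- Q and r on [c,d]
    have hQr : ∀ s ∈ Icc c d, r s = δ - ∫ x in c..s, a x := by
      intro s hsI
      have hadd : A s = A c + ∫ x in c..s, a x :=
        (intervalIntegral.integral_add_adjacent_intervals
          (haII 0 c le_rfl hc0 hct0)
          (haII c s hc0 hsI.1 (hsI.2.trans hdt0))).symm
      simp only [hr, hδdef, hadd]; ring
    -- quadratic identity for r
    have hrsq : ∀ t ∈ Icc c d, (r t)^2 = δ^2 - 2 * ∫ s in c..t, a s * r s := by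
      intro t htI
      have h1 := step_sq a c t htI.1 (haIcd.mono_set (Icc_subset_Icc le_rfl htI.2)) δ
      have h2 : ∫ s in c..t, a s * (δ - ∫ x in c..s, a x) = ∫ s in c..t, a s * r s := by
        apply intervalIntegral.integral_congr
        intro s hsI
        rw [uIcc_of_le htI.1] at hsI
        dsimp only
        rw [hQr s ⟨hsI.1, hsI.2.trans htI.2⟩]
      rw [← hQr t htI] at h1
      rw [h1, h2]
    -- the equation for y on [c,d]
    have hys : ∀ t ∈ Icc c d, y t = y c - 2 * ∫ s in c..t, a s * u s := by
      intro t htI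
      have h0t : (0:ℝ) ≤ t := hc0.trans htI.1
      have e1 := hyeq t h0t
      have e2 := hyeq c hc0
      have hadd : (∫ s in (0:ℝ)..t, a s * u s)
          = (∫ s in (0:ℝ)..c, a s * u s) + ∫ s in c..t, a s * u s :=
        (intervalIntegral.integral_add_adjacent_intervals
          (hauII 0 c le_rfl hc0 hct0)
          (hauII c t hc0 htI.1 (htI.2.trans hdt0))).symm
      rw [e1, e2, hadd]; ring
    -- key identity
    have hauII' : ∀ t ∈ Icc c d, IntervalIntegrable (fun s => a s * u s) volume c t :=
      fun t htI => hauII c t hc0 htI.1 (htI.2.trans hdt0)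
    have harII' : ∀ t ∈ Icc c d, IntervalIntegrable (fun s => a s * r s) volume c t := by
      intro t htI
      apply IntegrableOn.intervalIntegrable
      rw [uIcc_of_le htI.1]
      exact (haIcd.mono_set (Icc_subset_Icc le_rfl htI.2)).mul_continuousOn
        ((hrcont.mono hIsub).mono (Icc_subset_Icc le_rfl htI.2)) isCompact_Icc
    have hkey : ∀ t ∈ Icc c d,
        (u t - r t) * (u t + r t) = -2 * ∫ s in c..t, a s * (u s - r s) := by
      intro t htI
      have h0t : (0:ℝ) ≤ t := hc0.trans htI.1
      have h1 : u t ^ 2 - r t ^ 2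
          = (y c - δ^2) - 2 * ((∫ s in c..t, a s * u s) - ∫ s in c..t, a s * r s) := by
        rw [← hyu t h0t, hys t htI, hrsq t htI]; ring
      have h2 : y c = δ^2 := by rw [hyu c hc0, huc]
      have h3 : (∫ s in c..t, a s * u s) - (∫ s in c..t, a s * r s)
          = ∫ s in c..t, a s * (u s - r s) := by
        rw [← intervalIntegral.integral_sub (hauII' t htI) (harII' t htI)]
        apply intervalIntegral.integral_congr
        intro s _; ring
      rw [h3, h2] at h1
      calc (u t - r t) * (u t + r t) = u t ^2 - r t ^2 := by ring
        _ = -2 * ∫ s in c..t, a s * (u s - r s) := by rw [h1]; ring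
    -- sup of |u - r| on Icc c d
    have hφcont : ContinuousOn (fun s => |u s - r s|) (Icc c d) :=
      (((hucont.mono hIsub).sub (hrcont.mono hIsub))).abs
    obtain ⟨m, hmI, hmax⟩ := isCompact_Icc.exists_isMaxOn (nonempty_Icc.2 hcd) hφcont
    obtain ⟨M, hMdef⟩ : ∃ x : ℝ, x = |u m - r m| := ⟨_, rfl⟩
    have hmax' : ∀ x ∈ Icc c d, |u x - r x| ≤ M := fun x hx => hMdef ▸ hmax hx
    have hMnn : 0 ≤ M := hMdef ▸ abs_nonneg _
    -- integral bound
    have hbound : ∀ t ∈ Icc c d, |u t - r t| * δ ≤ M * δ / 4 := by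
      intro t htI
      have h0t : (0:ℝ) ≤ t := hc0.trans htI.1
      have hurt : δ ≤ u t + r t := by
        have h1 := (hP t htI).1
        have h2 := (hP t htI).2.1
        calc δ = δ/2 + δ/2 := by ring
          _ ≤ u t + r t := (add_lt_add h1 h2).le
      have hφII : IntervalIntegrable (fun s => a s * (u s - r s)) volume c t :=
        ((hauII' t htI).sub (harII' t htI)).congr ?congr
      case congr =>
        intro s _; dsimp only; ring
      have habsII : IntervalIntegrable (fun s => |a s| * M) volume c t :=
        ((haAbsII c t hc0 htI.1 (htI.2.trans hdt0))).mul_const M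
      have step1 : |∫ s in c..t, a s * (u s - r s)| ≤ ∫ s in c..t, |a s * (u s - r s)| :=
        intervalIntegral.abs_integral_le_integral_abs htI.1
      have step2 : (∫ s in c..t, |a s * (u s - r s)|) ≤ ∫ s in c..t, |a s| * M := by
        apply intervalIntegral.integral_mono_on htI.1 hφII.abs habsII
        intro x hx
        rw [abs_mul]
        exact mul_le_mul_of_nonneg_left
          (hmax' x ⟨hx.1, hx.2.trans htI.2⟩) (abs_nonneg _)
      have step3 : (∫ s in c..t, |a s| * M) = (N t - N c) * M := by
        have hadd : N t = N c + ∫ s in c..t, |a s| :=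
          (intervalIntegral.integral_add_adjacent_intervals
            (haAbsII 0 c le_rfl hc0 hct0)
            (haAbsII c t hc0 htI.1 (htI.2.trans hdt0))).symm
        rw [intervalIntegral.integral_mul_const, hadd]; ring
      have step4 : N t - N c < δ/8 := by have := (hP t htI).2.2; linarith
      have hNtc : 0 ≤ N t - N c := by
        have hadd : N t = N c + ∫ s in c..t, |a s| :=
          (intervalIntegral.integral_add_adjacent_intervals
            (haAbsII 0 c le_rfl hc0 hct0)
            (haAbsII c t hc0 htI.1 (htI.2.trans hdt0))).symm
        have : 0 ≤ ∫ s in c..t, |a s| :=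
          intervalIntegral.integral_nonneg htI.1 (fun x _ => abs_nonneg _)
        linarith
      have hchain : |u t - r t| * (u t + r t) ≤ 2 * (M * (δ/8)) := by
        have := hkey t htI
        have habs : |u t - r t| * (u t + r t) = |(u t - r t) * (u t + r t)| := by
          rw [abs_mul, abs_of_nonneg (by linarith : (0:ℝ) ≤ u t + r t)]
        rw [habs, this, abs_mul]
        have : |∫ s in c..t, a s * (u s - r s)| ≤ M * (δ/8) := by
          calc |∫ s in c..t, a s * (u s - r s)| ≤ ∫ s in c..t, |a s * (u s - r s)| := step1
            _ ≤ ∫ s in c..t, |a s| * M := step2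
            _ = (N t - N c) * M := step3
            _ ≤ (δ/8) * M := by nlinarith
            _ = M * (δ/8) := by ring
        calc |(-2:ℝ)| * |∫ s in c..t, a s * (u s - r s)| = 2 * |∫ s in c..t, a s * (u s - r s)| := by
              rw [abs_neg, abs_two]
          _ ≤ 2 * (M * (δ/8)) := by linarith
      have h5 : |u t - r t| * δ ≤ |u t - r t| * (u t + r t) :=
        mul_le_mul_of_nonneg_left hurt (abs_nonneg _)
      calc |u t - r t| * δ ≤ 2 * (M * (δ/8)) := le_trans h5 hchain
        _ = M * δ / 4 := by ring
    -- conclude M = 0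
    have hM0 : M = 0 := by
      have h1 := hbound m hmI
      rw [← hMdef] at h1
      nlinarith
    have hur : ∀ s ∈ Icc c d, u s = r s := by
      intro s hsI
      have h1 : |u s - r s| ≤ 0 := hM0 ▸ hmax' s hsI
      have := abs_nonneg (u s - r s)
      have : |u s - r s| = 0 := le_antisymm h1 this
      rw [abs_eq_zero] at this; linarith
    -- d ∈ S, contradiction
    have hdS : d ∈ S := by
      refine ⟨⟨hc0.trans hcd, hdt0⟩, fun s hs => ?_⟩
      rcases le_or_gt s c with h | h
      · exact hcS s ⟨hs.1, h⟩
      · have hsI : s ∈ Icc c d := ⟨h.le, hs.2⟩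
        refine ⟨?_, hur s hsI⟩
        have h1 : δ/2 < u s := (hP s hsI).1
        rw [hyu s hs.1]
        nlinarith
    have : d ≤ c := le_csSup hbdd hdS
    have : c < d := by simp [hd]; linarith
    linarith
  -- finish
  have hfinal := hcS t0 (by rw [hcfull]; exact ⟨ht0, le_rfl⟩)
  exact ⟨hfinal.1, hfinal.2⟩
end

section
/- Let a: [0,∞) → ℝ be locally integrable, let y₀ ≥ 0, and assume that the negative part a⁻ := max(−a, 0) satisfies ∫₀^∞ a⁻(s) ds < +∞. Let y be the maximal solution of the Cauchy problem y' + 2a√y = 0, y(0) = y₀. Then 0 ≤ √(y(t)) ≤ √y₀ + ∫₀^∞ a⁻(s) ds for every t ≥ 0, and the limit lim_{t→∞} √(y(t)) exists and is finite. -/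
open MeasureTheory Set Filter

lemma quad (f : ℝ → ℝ) (t₁ t : ℝ) (h : t₁ ≤ t)
    (hf : IntegrableOn f (Icc t₁ t) volume) :
    ∫ s in t₁..t, f s * (∫ u in t₁..s, f u) = (∫ s in t₁..t, f s)^2 / 2 := by
  set μ := volume.restrict (Ioc t₁ t) with hμ
  have hfμ : Integrable f μ := hf.mono_set Ioc_subset_Icc_self
  set F : ℝ × ℝ → ℝ := fun p => f p.1 * f p.2 with hF
  have hFint : Integrable F (μ.prod μ) := hfμ.mul_prod hfμ
  have hmle : MeasurableSet {q : ℝ × ℝ | q.2 ≤ q.1} :=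
    (isClosed_le continuous_snd continuous_fst).measurableSet
  have hmlt : MeasurableSet {q : ℝ × ℝ | q.1 < q.2} :=
    (isOpen_lt continuous_fst continuous_snd).measurableSet
  set k : ℝ × ℝ → ℝ := ({q : ℝ × ℝ | q.2 ≤ q.1}).indicator F with hk
  set k' : ℝ × ℝ → ℝ := ({q : ℝ × ℝ | q.1 < q.2}).indicator F with hk'
  have hkint : Integrable k (μ.prod μ) := hFint.indicator hmle
  have hk'int : Integrable k' (μ.prod μ) := hFint.indicator hmlt
  have inner_eq : ∀ s : ℝ, (∫ u, k (s, u) ∂μ) = f s * ∫ u in Iic s, f u ∂μ := by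
    intro s
    have e1 : (fun u => k (s, u)) = (Iic s).indicator (fun u => f s * f u) := by
      funext u
      by_cases hu : u ≤ s
      · simp [hk, hF, Set.indicator_of_mem, hu, mem_Iic, Set.mem_setOf_eq]
      · simp [hk, hF, Set.indicator_of_notMem, hu, mem_Iic, Set.mem_setOf_eq]
    rw [e1, integral_indicator measurableSet_Iic, integral_const_mul]
  have inner_eq' : ∀ u : ℝ, (∫ s, k' (s, u) ∂μ) = f u * ∫ s in Iic u, f s ∂μ := by
    intro u
    have e1 : (fun s => k' (s, u)) = (Iio u).indicator (fun s => f u * f s) := by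
      funext s
      by_cases hs : s < u
      · simp [hk', hF, Set.indicator_of_mem, hs, mem_Iio, Set.mem_setOf_eq, mul_comm]
      · simp [hk', hF, Set.indicator_of_notMem, hs, mem_Iio, Set.mem_setOf_eq]
    rw [e1, integral_indicator measurableSet_Iio, integral_const_mul,
      setIntegral_congr_set Iio_ae_eq_Iic]
  have hXk : ∫ s, (∫ u, k (s, u) ∂μ) ∂μ = ∫ s, (f s * ∫ u in Iic s, f u ∂μ) ∂μ :=
    integral_congr_ae (.of_forall inner_eq)
  have hXk' : ∫ s, (∫ u, k' (s, u) ∂μ) ∂μ = ∫ s, (f s * ∫ u in Iic s, f u ∂μ) ∂μ := by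
    rw [integral_integral_swap (f := fun s u => k' (s, u)) (by exact hk'int)]
    exact integral_congr_ae (.of_forall inner_eq')
  have hae : ∀ᵐ s ∂μ, (∫ u, k (s, u) ∂μ) + (∫ u, k' (s, u) ∂μ) = ∫ u, F (s, u) ∂μ := by
    filter_upwards [hkint.prod_right_ae, hk'int.prod_right_ae] with s h1 h2
    rw [← integral_add h1 h2]
    refine integral_congr_ae (.of_forall fun u => ?_)
    by_cases hu : u ≤ s
    · simp [hk, hk', hF, Set.indicator_of_mem, Set.indicator_of_notMem, hu,
        not_lt.mpr hu, Set.mem_setOf_eq]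
    · simp [hk, hk', hF, Set.indicator_of_mem, Set.indicator_of_notMem, hu,
        lt_of_not_ge hu, Set.mem_setOf_eq]
  have h2 : (∫ s, (∫ u, k (s, u) ∂μ) ∂μ) + (∫ s, (∫ u, k' (s, u) ∂μ) ∂μ)
      = ∫ s, (∫ u, F (s, u) ∂μ) ∂μ := by
    rw [← integral_add hkint.integral_prod_left hk'int.integral_prod_left]
    exact integral_congr_ae hae
  have hFsum : ∫ s, (∫ u, F (s, u) ∂μ) ∂μ = (∫ s, f s ∂μ) ^ 2 := by
    have : ∀ s : ℝ, (∫ u, F (s, u) ∂μ) = f s * ∫ u, f u ∂μ := fun s => by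
      simp only [hF]; exact integral_const_mul _ _
    rw [integral_congr_ae (.of_forall this), integral_mul_const, sq]
  have key : ∫ s, (f s * ∫ u in Iic s, f u ∂μ) ∂μ = (∫ s, f s ∂μ) ^ 2 / 2 := by
    rw [hXk, hXk', hFsum] at h2; linarith
  rw [intervalIntegral.integral_of_le h]
  have hout : ∀ s ∈ Ioc t₁ t, f s * (∫ u in t₁..s, f u) = f s * ∫ u in Iic s, f u ∂μ := by
    intro s hs
    congr 1
    have hseteq : Iic s ∩ Ioc t₁ t = Ioc t₁ s := by
      ext u
      simp only [mem_inter_iff, mem_Iic, mem_Ioc]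
      constructor
      · rintro ⟨h1, h2, h3⟩; exact ⟨h2, h1⟩
      · rintro ⟨h1, h2⟩; exact ⟨h2, h1, h2.trans hs.2⟩
    rw [intervalIntegral.integral_of_le hs.1.le, hμ,
      Measure.restrict_restrict measurableSet_Iic, hseteq]
  rw [setIntegral_congr_fun measurableSet_Ioc hout]
  rw [key, intervalIntegral.integral_of_le h]

lemma sqrt_bound (a : ℝ → ℝ) (y₀ : ℝ) (ha : LocIntOn a) (y : ℝ → ℝ) (hsol : IsSol a y₀ y)
    (haneg : IntegrableOn (fun s => max (-a s) 0) (Ici 0) volume)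
    (t₁ t : ℝ) (h₁ : 0 ≤ t₁) (ht : t₁ ≤ t) :
    Real.sqrt (y t) ≤ Real.sqrt (y t₁) + ∫ s in t₁..t, max (-a s) 0 := by
  set f : ℝ → ℝ := fun s => max (-a s) 0 with hf
  have hf0 : ∀ s, 0 ≤ f s := fun s => le_max_right _ _
  have hfIcc : ∀ u v : ℝ, 0 ≤ u → IntegrableOn f (Icc u v) volume :=
    fun u v hu => haneg.mono_set (fun x hx => hu.trans hx.1)
  have hsy : ContinuousOn (fun s => Real.sqrt (y s)) (Ici 0) :=
    Real.continuous_sqrt.comp_continuousOn hsol.1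
  have haInt : ∀ u v : ℝ, 0 ≤ u → u ≤ v →
      IntegrableOn (fun s => a s * Real.sqrt (y s)) (Icc u v) volume := by
    intro u v hu huv
    exact ((ha v (hu.trans huv)).mono_set (Icc_subset_Icc hu le_rfl)).mul_continuousOn
      (hsy.mono (fun x hx => hu.trans hx.1)) isCompact_Icc
  have haII : ∀ u v : ℝ, 0 ≤ u → u ≤ v →
      IntervalIntegrable (fun s => a s * Real.sqrt (y s)) volume u v := by
    intro u v hu huv
    exact (intervalIntegrable_iff_integrableOn_Ioc_of_le huv).mpr
      ((haInt u v hu huv).mono_set Ioc_subset_Icc_self)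
  have hfII : ∀ u v : ℝ, 0 ≤ u → u ≤ v → IntervalIntegrable f volume u v := by
    intro u v hu huv
    exact (intervalIntegrable_iff_integrableOn_Ioc_of_le huv).mpr
      ((hfIcc u v hu).mono_set Ioc_subset_Icc_self)
  have hfsyII : ∀ u v : ℝ, 0 ≤ u → u ≤ v →
      IntervalIntegrable (fun s => f s * Real.sqrt (y s)) volume u v := by
    intro u v hu huv
    exact (intervalIntegrable_iff_integrableOn_Ioc_of_le huv).mpr
      (((hfIcc u v hu).mul_continuousOn (hsy.mono (fun x hx => hu.trans hx.1))
        isCompact_Icc).mono_set Ioc_subset_Icc_self)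
  -- step 1: y increment inequality
  have incr : ∀ T, t₁ ≤ T →
      y T ≤ y t₁ + 2 * ∫ s in t₁..T, f s * Real.sqrt (y s) := by
    intro T hT
    have hT0 : 0 ≤ T := h₁.trans hT
    have e1 := hsol.2.2 T hT0
    have e2 := hsol.2.2 t₁ h₁
    have eadd := intervalIntegral.integral_add_adjacent_intervals
      (haII 0 t₁ le_rfl h₁) (haII t₁ T h₁ hT)
    have hmono : (∫ s in t₁..T, (- (a s * Real.sqrt (y s))))
        ≤ ∫ s in t₁..T, f s * Real.sqrt (y s) := by
      apply intervalIntegral.integral_mono_on hT ((haII t₁ T h₁ hT).neg) (hfsyII t₁ T h₁ hT)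
      intro x _
      simp only [Pi.neg_apply]
      have : -(a x * Real.sqrt (y x)) = (-a x) * Real.sqrt (y x) := by ring
      rw [this]
      exact mul_le_mul_of_nonneg_right (le_max_left _ _) (Real.sqrt_nonneg _)
    rw [intervalIntegral.integral_neg] at hmono
    have := eadd
    nlinarith [hmono]
  -- step 2: epsilon bound via first crossing
  have key : ∀ ε : ℝ, 0 < ε →
      y t ≤ (Real.sqrt (y t₁ + ε) + ∫ s in t₁..t, f s) ^ 2 := by
    intro ε hε
    by_contra hcon
    push_neg at hcon
    set c : ℝ → ℝ := fun x => ∫ s in t₁..x, f s with hc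
    set K : ℝ := Real.sqrt (y t₁ + ε) with hK
    set B : ℝ → ℝ := fun x => (K + c x) ^ 2 with hB
    have hyt₁ : 0 ≤ y t₁ := hsol.2.1 t₁ h₁
    have hK2 : K ^ 2 = y t₁ + ε := Real.sq_sqrt (by linarith)
    have hK0 : 0 ≤ K := Real.sqrt_nonneg _
    set E : Set ℝ := {x | x ∈ Icc t₁ t ∧ B x < y x} with hE
    have hT₀E : t ∈ E := ⟨⟨ht, le_rfl⟩, hcon⟩
    have hbdd : BddBelow E := ⟨t₁, fun x hx => hx.1.1⟩
    set T : ℝ := sInf E with hT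
    have hTmem : T ∈ Icc t₁ t :=
      ⟨le_csInf ⟨t, hT₀E⟩ (fun x hx => hx.1.1), csInf_le hbdd hT₀E⟩
    -- continuity of c on Icc t₁ t
    have hcCont : ContinuousOn c (Icc t₁ t) := by
      have h0 := intervalIntegral.continuousOn_primitive (f := f) (a := t₁) (b := t)
        (μ := volume) (hfIcc t₁ t h₁)
      apply h0.congr
      intro x hx
      exact intervalIntegral.integral_of_le hx.1
    have hBCont : ContinuousOn B (Icc t₁ t) := (continuousOn_const.add hcCont).pow 2
    have hyCont : ContinuousOn y (Icc t₁ t) :=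
      hsol.1.mono (fun x hx => h₁.trans hx.1)
    -- y T ≥ B T
    have hyT : B T ≤ y T := by
      have hED : E ⊆ Icc t₁ t ∩ (fun x => y x - B x) ⁻¹' (Ici 0) := by
        intro x hx
        exact ⟨hx.1, by simp only [mem_preimage, mem_Ici]; linarith [hx.2]⟩
      have hDc : IsClosed (Icc t₁ t ∩ (fun x => y x - B x) ⁻¹' (Ici 0)) :=
        (hyCont.sub hBCont).preimage_isClosed_of_isClosed isClosed_Icc isClosed_Ici
      have hTc : T ∈ closure E := csInf_mem_closure ⟨t, hT₀E⟩ hbdd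
      have := (hDc.closure_subset_iff.mpr hED) hTc
      have := this.2
      simp only [mem_preimage, mem_Ici] at this
      linarith
    -- on [t₁, T), y ≤ B
    have hbelow : ∀ x, t₁ ≤ x → x < T → Real.sqrt (y x) ≤ K + c x := by
      intro x hx1 hx2
      have hxE : x ∉ E := fun hmem => absurd (csInf_le hbdd hmem) (not_le.mpr hx2)
      have hxIcc : x ∈ Icc t₁ t := ⟨hx1, hx2.le.trans hTmem.2⟩
      have hyB : y x ≤ B x := by
        by_contra hlt
        exact hxE ⟨hxIcc, not_le.mp hlt⟩
      have hc0 : 0 ≤ c x := intervalIntegral.integral_nonneg hx1 (fun s _ => hf0 s)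
      calc Real.sqrt (y x) ≤ Real.sqrt (B x) := Real.sqrt_le_sqrt hyB
        _ = K + c x := by
            rw [hB]
            exact Real.sqrt_sq (by linarith)
    -- integral comparison on [t₁, T]
    have hcmp : (∫ s in t₁..T, f s * Real.sqrt (y s))
        ≤ ∫ s in t₁..T, f s * (K + c s) := by
      apply intervalIntegral.integral_mono_ae_restrict hTmem.1
        (hfsyII t₁ T h₁ hTmem.1)
      · -- integrability of f * (K + c)
        refine (intervalIntegrable_iff_integrableOn_Ioc_of_le hTmem.1).mpr
          (((hfIcc t₁ T h₁).mul_continuousOn ?_ isCompact_Icc).mono_set Ioc_subset_Icc_self)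
        exact continuousOn_const.add (hcCont.mono (Icc_subset_Icc le_rfl hTmem.2))
      · have hsing : (volume.restrict (Icc t₁ T)) {T} = 0 := by
          rw [Measure.restrict_apply (measurableSet_singleton T)]
          exact measure_mono_null inter_subset_left (measure_singleton T)
        have hne : ∀ᵐ x ∂volume.restrict (Icc t₁ T), x ≠ T := by
          rw [ae_iff]
          convert hsing using 2
          ext x; simp
        filter_upwards [ae_restrict_mem measurableSet_Icc, hne] with x hx hxT
        have hxlt : x < T := lt_of_le_of_ne hx.2 hxT
        exact mul_le_mul_of_nonneg_left (hbelow x hx.1 hxlt) (hf0 x)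
    -- compute the right integral
    have heq : (∫ s in t₁..T, f s * (K + c s)) = K * c T + (c T) ^ 2 / 2 := by
      have hsplit : (∫ s in t₁..T, f s * (K + c s))
          = (∫ s in t₁..T, f s * K) + ∫ s in t₁..T, f s * c s := by
        rw [← intervalIntegral.integral_add]
        · congr 1; funext s; ring
        · exact (hfII t₁ T h₁ hTmem.1).mul_const K
        · refine (intervalIntegrable_iff_integrableOn_Ioc_of_le hTmem.1).mpr
            (((hfIcc t₁ T h₁).mul_continuousOn
              (hcCont.mono (Icc_subset_Icc le_rfl hTmem.2)) isCompact_Icc).mono_set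
              Ioc_subset_Icc_self)
      rw [hsplit, intervalIntegral.integral_mul_const,
        quad f t₁ T hTmem.1 (hfIcc t₁ T h₁)]
      ring
    -- conclude contradiction
    have hfin := incr T hTmem.1
    have hcT0 : 0 ≤ c T := intervalIntegral.integral_nonneg hTmem.1 (fun s _ => hf0 s)
    have : y T < B T := by
      have : y T ≤ y t₁ + 2 * (K * c T + (c T) ^ 2 / 2) := by
        calc y T ≤ y t₁ + 2 * ∫ s in t₁..T, f s * Real.sqrt (y s) := hfin
          _ ≤ y t₁ + 2 * ∫ s in t₁..T, f s * (K + c s) := by linarith [hcmp]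
          _ = y t₁ + 2 * (K * c T + (c T) ^ 2 / 2) := by rw [heq]
      have hBT : B T = K ^ 2 + 2 * K * c T + (c T) ^ 2 := by rw [hB]; ring
      rw [hBT, hK2]
      linarith
    linarith [hyT]
  -- step 3: let ε → 0
  have hc0 : 0 ≤ ∫ s in t₁..t, f s := intervalIntegral.integral_nonneg ht (fun s _ => hf0 s)
  have hlim : Tendsto (fun ε : ℝ => Real.sqrt (y t₁ + ε) + ∫ s in t₁..t, f s)
      (nhdsWithin 0 (Ioi 0)) (nhds (Real.sqrt (y t₁) + ∫ s in t₁..t, f s)) := by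
    have hcont : Continuous (fun ε : ℝ => Real.sqrt (y t₁ + ε) + ∫ s in t₁..t, f s) :=
      (Real.continuous_sqrt.comp (continuous_const.add continuous_id)).add continuous_const
    have := hcont.tendsto 0
    simp only [add_zero] at this
    exact this.mono_left nhdsWithin_le_nhds
  refine ge_of_tendsto hlim ?_
  filter_upwards [self_mem_nhdsWithin] with ε hε
  have hkey := key ε hε
  have h1 : Real.sqrt (y t) ≤ Real.sqrt ((Real.sqrt (y t₁ + ε) + ∫ s in t₁..t, f s) ^ 2) :=
    Real.sqrt_le_sqrt hkey
  rwa [Real.sqrt_sq (by positivity)] at h1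

theorem stmt11 (a : ℝ → ℝ) (y₀ : ℝ) (ha : LocIntOn a) (hy₀ : 0 ≤ y₀)
    (haneg : MeasureTheory.IntegrableOn (fun s => max (-a s) 0) (Set.Ici 0)
      MeasureTheory.volume)
    (y : ℝ → ℝ) (hy : IsMaxSol a y₀ y) :
    (∀ t : ℝ, 0 ≤ t → 0 ≤ Real.sqrt (y t) ∧
      Real.sqrt (y t) ≤ Real.sqrt y₀ + ∫ s in Set.Ici (0:ℝ), max (-a s) 0) ∧
    ∃ L : ℝ, Filter.Tendsto (fun t => Real.sqrt (y t)) Filter.atTop (nhds L) := by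
  obtain ⟨hsol, -⟩ := hy
  set f : ℝ → ℝ := fun s => max (-a s) 0 with hf
  have hf0 : ∀ s, 0 ≤ f s := fun s => le_max_right _ _
  have hy0 : y 0 = y₀ := by
    have := hsol.2.2 0 le_rfl
    simpa using this
  have bound := sqrt_bound a y₀ ha y hsol haneg
  -- tail integral
  set G : ℝ → ℝ := fun u => ∫ s in Ici u, f s with hG
  have hGnonneg : ∀ u, 0 ≤ G u := fun u =>
    setIntegral_nonneg measurableSet_Ici (fun x _ => hf0 x)
  have hsplit : ∀ u v : ℝ, 0 ≤ u → u ≤ v → G u = (∫ s in u..v, f s) + G v := by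
    intro u v hu huv
    have hdisj : Disjoint (Ico u v) (Ici v) := by
      rw [Set.disjoint_left]
      intro x hx hx'
      exact absurd hx.2 (not_lt.mpr hx')
    have hunion : Ico u v ∪ Ici v = Ici u := Ico_union_Ici_eq_Ici huv
    have hint1 : IntegrableOn f (Ico u v) volume :=
      haneg.mono_set (fun x hx => hu.trans hx.1)
    have hint2 : IntegrableOn f (Ici v) volume :=
      haneg.mono_set (fun x hx => (hu.trans huv).trans hx)
    have : G u = (∫ s in Ico u v, f s) + ∫ s in Ici v, f s := by
      rw [hG]
      simp only
      rw [← hunion, setIntegral_union hdisj measurableSet_Ici hint1 hint2]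
    rw [this, integral_Ico_eq_integral_Ioo, ← integral_Ioc_eq_integral_Ioo,
      ← intervalIntegral.integral_of_le huv]
  constructor
  · intro t ht
    refine ⟨Real.sqrt_nonneg _, ?_⟩
    have hb := bound 0 t le_rfl ht
    rw [hy0] at hb
    have hs := hsplit 0 t le_rfl ht
    have := hGnonneg t
    have hGI : G 0 = ∫ s in Ici (0:ℝ), max (-a s) 0 := rfl
    rw [← hGI]
    linarith
  · -- the limit
    set H : ℝ → ℝ := fun u => Real.sqrt (y (max u 0)) + G (max u 0) with hH
    have hanti : Antitone H := by
      intro u v huv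
      have hpq : max u 0 ≤ max v 0 := max_le_max huv le_rfl
      have hp0 : (0:ℝ) ≤ max u 0 := le_max_right _ _
      have hb := bound (max u 0) (max v 0) hp0 hpq
      have hs := hsplit (max u 0) (max v 0) hp0 hpq
      simp only [hH]
      linarith
    have hbddH : BddBelow (range H) := by
      refine ⟨0, ?_⟩
      rintro x ⟨u, rfl⟩
      exact add_nonneg (Real.sqrt_nonneg _) (hGnonneg _)
    have hHlim : Tendsto H atTop (nhds (⨅ u, H u)) := tendsto_atTop_ciInf hanti hbddH
    have h1 : Tendsto (fun v => ∫ s in (0:ℝ)..v, f s) atTop (nhds (∫ s in Ioi (0:ℝ), f s)) :=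
      intervalIntegral_tendsto_integral_Ioi 0 (haneg.mono_set Ioi_subset_Ici_self) tendsto_id
    have hIoi : (∫ s in Ioi (0:ℝ), f s) = G 0 := (integral_Ici_eq_integral_Ioi).symm
    have htail : Tendsto G atTop (nhds 0) := by
      have h2 : Tendsto (fun v => G 0 - ∫ s in (0:ℝ)..v, f s) atTop (nhds (G 0 - G 0)) := by
        rw [← hIoi]
        exact tendsto_const_nhds.sub h1
      rw [sub_self] at h2
      apply h2.congr'
      filter_upwards [eventually_ge_atTop (0:ℝ)] with v hv
      have := hsplit 0 v le_rfl hv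
      linarith
    refine ⟨⨅ u, H u, ?_⟩
    have hfin : Tendsto (fun t => H t - G t) atTop (nhds ((⨅ u, H u) - 0)) :=
      hHlim.sub htail
    rw [sub_zero] at hfin
    apply hfin.congr'
    filter_upwards [eventually_ge_atTop (0:ℝ)] with t ht0
    simp only [hH, max_eq_left ht0]
    ring
end

section
/- Let a: [0,∞) → ℝ be locally integrable, let y₀ ≥ 0, and assume that the negative part a⁻ := max(−a, 0) satisfies ∫₀^∞ a⁻(s) ds < +∞. Let y be the maximal solution of the Cauchy problem y' + 2a√y = 0, y(0) = y₀, and set a*(s) := a(s) if y(s) > 0 and a*(s) := 0 otherwise. Then ∫₀^∞ |a*(s)| ds ≤ √y₀ + 2∫₀^∞ a⁻(s) ds; in particular the function t ↦ √(y(t)) has finite total variation on [0,∞). -/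
open MeasureTheory Set Filter Topology
open scoped ENNReal NNReal

namespace Stmt12Aux

variable {a : ℝ → ℝ} {y₀ : ℝ} {y : ℝ → ℝ}

lemma contOn_w (hsol : IsSol a y₀ y) : ContinuousOn (fun t => Real.sqrt (y t)) (Ici 0) :=
  Real.continuous_sqrt.comp_continuousOn hsol.1

lemma a_intervalInt (ha : LocIntOn a) {u v : ℝ} (hu : 0 ≤ u) (huv : u ≤ v) :
    IntervalIntegrable a volume u v := by
  rw [intervalIntegrable_iff_integrableOn_Ioc_of_le huv]
  exact (ha v (hu.trans huv)).mono_set (Ioc_subset_Icc_self.trans (Icc_subset_Icc_left hu))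

lemma f_intOn (ha : LocIntOn a) (hsol : IsSol a y₀ y) {T : ℝ} (hT : 0 ≤ T) :
    IntegrableOn (fun s => a s * Real.sqrt (y s)) (Icc 0 T) := by
  apply MeasureTheory.IntegrableOn.mul_continuousOn (ha T hT)
    ((contOn_w hsol).mono (Icc_subset_Ici_self)) isCompact_Icc

lemma f_intervalInt (ha : LocIntOn a) (hsol : IsSol a y₀ y) {u v : ℝ} (hu : 0 ≤ u)
    (huv : u ≤ v) : IntervalIntegrable (fun s => a s * Real.sqrt (y s)) volume u v := by
  rw [intervalIntegrable_iff_integrableOn_Ioc_of_le huv]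
  exact (f_intOn ha hsol (hu.trans huv)).mono_set
    (Ioc_subset_Icc_self.trans (Icc_subset_Icc_left hu))

lemma ydiff (ha : LocIntOn a) (hsol : IsSol a y₀ y) {u v : ℝ} (hu : 0 ≤ u) (huv : u ≤ v) :
    y v - y u = -(2 * ∫ s in u..v, a s * Real.sqrt (y s)) := by
  rw [hsol.2.2 v (hu.trans huv), hsol.2.2 u hu]
  have h := intervalIntegral.integral_interval_sub_left
    (f_intervalInt ha hsol le_rfl (hu.trans huv)) (f_intervalInt ha hsol le_rfl hu)
  rw [← h]; ring

lemma step (ha : LocIntOn a) (hsol : IsSol a y₀ y) {p q m ε : ℝ} (hm : 0 < m) (hε : 0 ≤ ε)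
    (hp : 0 ≤ p) (hpq : p ≤ q)
    (hwm : ∀ s ∈ Icc p q, m ≤ Real.sqrt (y s))
    (hosc : ∀ s ∈ Icc p q,
      |Real.sqrt (y s) - Real.sqrt (y p)| ≤ ε ∧ |Real.sqrt (y s) - Real.sqrt (y q)| ≤ ε) :
    |Real.sqrt (y q) - Real.sqrt (y p) + ∫ s in p..q, a s| ≤ ε / m * ∫ s in p..q, |a s| := by
  set w : ℝ → ℝ := fun t => Real.sqrt (y t) with hwdef
  set S : ℝ := w q + w p with hS
  have hq : 0 ≤ q := hp.trans hpq
  have hmp : m ≤ w p := hwm p ⟨le_rfl, hpq⟩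
  have hmq : m ≤ w q := hwm q ⟨hpq, le_rfl⟩
  have hS2 : 2 * m ≤ S := by simp only [hS]; linarith
  have hSpos : 0 < S := lt_of_lt_of_le (by linarith) hS2
  have hsq : ∀ s, 0 ≤ s → w s * w s = y s := fun s hs =>
    Real.mul_self_sqrt (hsol.2.1 s hs)
  have h1 : (w q - w p) * S = y q - y p := by
    have := hsq p hp; have := hsq q hq
    simp only [hS]; nlinarith
  have h2 : y q - y p = -(2 * ∫ s in p..q, a s * w s) := ydiff ha hsol hp hpq
  have h3 : w q - w p = -(2 / S * ∫ s in p..q, a s * w s) := by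
    field_simp at h1 ⊢
    nlinarith [h1, h2]
  have hfa : IntervalIntegrable a volume p q := a_intervalInt ha hp hpq
  have hfaw : IntervalIntegrable (fun s => a s * w s) volume p q := f_intervalInt ha hsol hp hpq
  have h4 : w q - w p + ∫ s in p..q, a s
      = ∫ s in p..q, (a s - 2 / S * (a s * w s)) := by
    rw [intervalIntegral.integral_sub hfa (hfaw.const_mul (2 / S)),
      intervalIntegral.integral_const_mul]
    rw [h3]; ring
  rw [h4]
  have hbound : IntervalIntegrable (fun s => |a s| * (ε / m)) volume p q :=
    hfa.abs.mul_const _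
  have hle : |∫ s in p..q, (a s - 2 / S * (a s * w s))|
      ≤ ∫ s in p..q, |a s| * (ε / m) := by
    have habs : |∫ s in p..q, (a s - 2 / S * (a s * w s))|
        ≤ |∫ s in p..q, |a s| * (ε / m)| := by
      rw [← Real.norm_eq_abs (∫ s in p..q, a s - 2 / S * (a s * w s))]
      apply intervalIntegral.norm_integral_le_abs_of_norm_le (g := fun s => |a s| * (ε / m)) ?_ hbound
      rw [uIoc_of_le hpq]
      filter_upwards [ae_restrict_mem measurableSet_Ioc] with s hs
      have hsmem : s ∈ Icc p q := Ioc_subset_Icc_self hs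
      have h5 : a s - 2 / S * (a s * w s) = a s * ((S - 2 * w s) / S) := by
        field_simp
      rw [Real.norm_eq_abs, h5, abs_mul]
      apply mul_le_mul_of_nonneg_left ?_ (abs_nonneg _)
      rw [abs_div, abs_of_pos hSpos, div_le_div_iff₀ hSpos hm] at *
      have hb1 := (hosc s hsmem).1
      have hb2 := (hosc s hsmem).2
      have : |S - 2 * w s| ≤ 2 * ε := by
        have : S - 2 * w s = (w q - w s) + (w p - w s) := by simp only [hS]; ring
        rw [this]
        calc |(w q - w s) + (w p - w s)| ≤ |w q - w s| + |w p - w s| := abs_add_le _ _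
          _ ≤ ε + ε := by
              rw [abs_sub_comm] at hb1 hb2; exact add_le_add hb2 hb1
          _ = 2 * ε := by ring
      nlinarith [abs_nonneg (S - 2 * w s), hε, hm, hS2]
    refine habs.trans (le_of_eq (abs_of_nonneg ?_))
    apply intervalIntegral.integral_nonneg hpq
    intro s _; positivity
  calc |∫ s in p..q, (a s - 2 / S * (a s * w s))| ≤ ∫ s in p..q, |a s| * (ε / m) := hle
    _ = ε / m * ∫ s in p..q, |a s| := by
        rw [intervalIntegral.integral_mul_const, mul_comm]



lemma core (ha : LocIntOn a) (hsol : IsSol a y₀ y) {σ τ : ℝ} (hσ : 0 ≤ σ) (hστ : σ ≤ τ)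
    (hpos : ∀ s ∈ Icc σ τ, 0 < y s) :
    Real.sqrt (y τ) - Real.sqrt (y σ) = - ∫ s in σ..τ, a s := by
  rcases eq_or_lt_of_le hστ with rfl | hlt
  · simp
  set w : ℝ → ℝ := fun t => Real.sqrt (y t) with hwdef
  have hsub : Icc σ τ ⊆ Ici (0:ℝ) := fun s hs => hσ.trans hs.1
  have hwc : ContinuousOn w (Icc σ τ) := (contOn_w hsol).mono hsub
  obtain ⟨x₀, hx₀, hminon⟩ := isCompact_Icc.exists_isMinOn (nonempty_Icc.2 hστ) hwc
  have hmin : ∀ s ∈ Icc σ τ, w x₀ ≤ w s := fun s hs => hminon hs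
  set m : ℝ := w x₀ with hmdef
  have hm : 0 < m := Real.sqrt_pos.2 (hpos x₀ hx₀)
  have hwm : ∀ s ∈ Icc σ τ, m ≤ w s := hmin
  have hUC := Metric.uniformContinuousOn_iff_le.1
    (isCompact_Icc.uniformContinuousOn_of_continuous hwc)
  set C : ℝ := (∫ s in σ..τ, |a s|) / m with hCdef
  have hC : 0 ≤ C := div_nonneg
    (intervalIntegral.integral_nonneg hστ (fun u _ => abs_nonneg _)) hm.le
  have key : ∀ ε > (0:ℝ), |w τ - w σ + ∫ s in σ..τ, a s| ≤ ε * C := by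
    intro ε hε
    obtain ⟨δ, hδ, hUCδ⟩ := hUC ε hε
    obtain ⟨n, hn⟩ := exists_nat_gt ((τ - σ) / δ)
    have hn0 : 0 < (n:ℝ) := lt_of_le_of_lt (div_nonneg (by linarith) hδ.le) hn
    set h : ℝ := (τ - σ) / n with hhdef
    have hh0 : 0 < h := div_pos (by linarith) hn0
    have hhδ : h ≤ δ := by
      rw [div_le_iff₀ hn0]
      rw [div_lt_iff₀ hδ] at hn
      nlinarith
    set t : ℕ → ℝ := fun i => σ + i * h with htdef
    have ht0 : t 0 = σ := by simp [htdef]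
    have htn : t n = τ := by
      simp only [htdef, hhdef]
      field_simp
      ring
    have htmono : ∀ i, t i ≤ t (i + 1) := by
      intro i; simp only [htdef]
      have h1 : (i:ℝ) ≤ (i:ℝ) + 1 := by linarith
      push_cast
      nlinarith
    have htmem : ∀ i ≤ n, t i ∈ Icc σ τ := by
      intro i hi
      constructor
      · simp only [htdef]
        have : (0:ℝ) ≤ (i:ℝ) * h := by positivity
        linarith
      · simp only [htdef]
        have h1 : (i:ℝ) * h ≤ (n:ℝ) * h :=
          mul_le_mul_of_nonneg_right (Nat.cast_le.2 hi) hh0.le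
        have hnh : (n:ℝ) * h = τ - σ := by rw [hhdef]; field_simp [hn0.ne']
        linarith
    have hdiff : ∀ i, t (i + 1) - t i = h := by
      intro i; simp only [htdef]; push_cast; ring
    have hii : ∀ i < n, IntervalIntegrable a volume (t i) (t (i+1)) :=
      fun i hi => a_intervalInt ha (hσ.trans (htmem i hi.le).1) (htmono i)
    have hiiabs : ∀ i < n, IntervalIntegrable (fun s => |a s|) volume (t i) (t (i+1)) :=
      fun i hi => (hii i hi).abs
    have hsum1 : ∑ i ∈ Finset.range n, ∫ s in (t i)..(t (i+1)), a s = ∫ s in σ..τ, a s := by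
      rw [intervalIntegral.sum_integral_adjacent_intervals hii, ht0, htn]
    have hsum2 : ∑ i ∈ Finset.range n, ∫ s in (t i)..(t (i+1)), |a s|
        = ∫ s in σ..τ, |a s| := by
      rw [intervalIntegral.sum_integral_adjacent_intervals hiiabs, ht0, htn]
    have hsum3 : ∑ i ∈ Finset.range n, (w (t (i+1)) - w (t i)) = w τ - w σ := by
      rw [Finset.sum_range_sub (fun i => w (t i)), ht0, htn]
    have hterm : ∀ i < n,
        |w (t (i+1)) - w (t i) + ∫ s in (t i)..(t (i+1)), a s|
          ≤ ε / m * ∫ s in (t i)..(t (i+1)), |a s| := by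
      intro i hi
      have hsubI := Icc_subset_Icc (htmem i hi.le).1 (htmem (i+1) hi).2
      apply step ha hsol hm hε.le (hσ.trans (htmem i hi.le).1) (htmono i)
      · exact fun s hs => hwm s (hsubI hs)
      · intro s hs
        have hs1 : s ∈ Icc σ τ := hsubI hs
        have hd1 : dist s (t i) ≤ δ := by
          rw [Real.dist_eq, abs_of_nonneg (by linarith [hs.1] : (0:ℝ) ≤ s - t i)]
          have := hdiff i
          linarith [hs.2]
        have hd2 : dist s (t (i+1)) ≤ δ := by
          rw [Real.dist_eq, abs_of_nonpos (by linarith [hs.2] : s - t (i+1) ≤ 0)]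
          have := hdiff i
          linarith [hs.1]
        constructor
        · have := hUCδ s hs1 (t i) (htmem i hi.le) hd1
          rwa [Real.dist_eq] at this
        · have := hUCδ s hs1 (t (i+1)) (htmem (i+1) hi) hd2
          rwa [Real.dist_eq] at this
    calc |w τ - w σ + ∫ s in σ..τ, a s|
        = |∑ i ∈ Finset.range n,
            (w (t (i+1)) - w (t i) + ∫ s in (t i)..(t (i+1)), a s)| := by
          rw [Finset.sum_add_distrib, hsum1, hsum3]
      _ ≤ ∑ i ∈ Finset.range n,
            |w (t (i+1)) - w (t i) + ∫ s in (t i)..(t (i+1)), a s| :=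
          Finset.abs_sum_le_sum_abs _ _
      _ ≤ ∑ i ∈ Finset.range n, ε / m * ∫ s in (t i)..(t (i+1)), |a s| := by
          apply Finset.sum_le_sum
          intro i hi
          exact hterm i (Finset.mem_range.1 hi)
      _ = ε / m * ∫ s in σ..τ, |a s| := by
          rw [← Finset.mul_sum, hsum2]
      _ = ε * C := by rw [hCdef]; ring
  have habs : |w τ - w σ + ∫ s in σ..τ, a s| = 0 := by
    by_contra hne
    have hpos' : 0 < |w τ - w σ + ∫ s in σ..τ, a s| :=
      lt_of_le_of_ne (abs_nonneg _) (Ne.symm hne)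
    set E := |w τ - w σ + ∫ s in σ..τ, a s|
    have := key (E / (C + 1)) (by positivity)
    have hCC : E / (C + 1) * C < E := by
      rw [div_mul_eq_mul_div, div_lt_iff₀ (by linarith)]
      nlinarith
    linarith
  have := abs_eq_zero.1 habs
  linarith
lemma L1 (ha : LocIntOn a) (hsol : IsSol a y₀ y) {u v : ℝ} (hu : 0 ≤ u) (huv : u ≤ v)
    (hpos : ∀ s ∈ Ioo u v, 0 < y s) :
    Real.sqrt (y v) - Real.sqrt (y u) = - ∫ s in u..v, a s := by
  rcases eq_or_lt_of_le huv with rfl | hlt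
  · simp
  set w : ℝ → ℝ := fun t => Real.sqrt (y t) with hwdef
  set g : ℝ → ℝ := fun x => w x + ∫ s in u..x, a s with hgdef
  have hgc : ContinuousOn g (Icc u v) := by
    apply ContinuousOn.add
    · exact (contOn_w hsol).mono (fun s hs => hu.trans hs.1)
    · have : IntegrableOn a (uIcc u v) volume := by
        rw [uIcc_of_le huv]
        exact (ha v (hu.trans huv)).mono_set (Icc_subset_Icc_left hu)
      have := intervalIntegral.continuousOn_primitive_interval this
      rwa [uIcc_of_le huv] at this
  have hconst : ∀ x ∈ Ioo u v, ∀ x' ∈ Ioo u v, g x = g x' := by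
    have key : ∀ x ∈ Ioo u v, ∀ x' ∈ Ioo u v, x ≤ x' → g x = g x' := by
      intro x hx x' hx' hxx'
      have hcore := core ha hsol (hu.trans hx.1.le) hxx'
        (fun s hs => hpos s ⟨lt_of_lt_of_le hx.1 hs.1, lt_of_le_of_lt hs.2 hx'.2⟩)
      have hsplit : (∫ s in u..x', a s) - ∫ s in u..x, a s = ∫ s in x..x', a s :=
        intervalIntegral.integral_interval_sub_left
          (a_intervalInt ha hu hx'.1.le) (a_intervalInt ha hu hx.1.le)
      simp only [hgdef]
      have : w x' - w x = -∫ s in x..x', a s := hcore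
      linarith
    intro x hx x' hx'
    rcases le_total x x' with hle | hle
    · exact key x hx x' hx' hle
    · exact (key x' hx' x hx hle).symm
  set c : ℝ := (u + v) / 2 with hcdef
  have hc : c ∈ Ioo u v := ⟨by simp only [hcdef]; linarith, by simp only [hcdef]; linarith⟩
  have hlim : ∀ z ∈ Icc u v, (𝓝[Ioo u v] z).NeBot → g z = g c := by
    intro z hz hne
    have h1 : Tendsto g (𝓝[Ioo u v] z) (𝓝 (g z)) :=
      ((hgc z hz).mono Ioo_subset_Icc_self).tendsto
    have h2 : Tendsto g (𝓝[Ioo u v] z) (𝓝 (g c)) := by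
      apply Tendsto.congr' _ tendsto_const_nhds
      filter_upwards [self_mem_nhdsWithin] with x hx
      exact hconst c hc x hx
    exact tendsto_nhds_unique h1 h2
  have hneu : (𝓝[Ioo u v] u).NeBot := by
    rw [← mem_closure_iff_nhdsWithin_neBot, closure_Ioo hlt.ne]
    exact ⟨le_rfl, hlt.le⟩
  have hnev : (𝓝[Ioo u v] v).NeBot := by
    rw [← mem_closure_iff_nhdsWithin_neBot, closure_Ioo hlt.ne]
    exact ⟨hlt.le, le_rfl⟩
  have h1 := hlim u ⟨le_rfl, hlt.le⟩ hneu
  have h2 := hlim v ⟨hlt.le, le_rfl⟩ hnev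
  have : g u = g v := h1.trans h2.symm
  simp only [hgdef, intervalIntegral.integral_same] at this
  linarith

lemma openV (hsol : IsSol a y₀ y) {α β : ℝ} (hα : 0 ≤ α) :
    IsOpen (Ioo α β ∩ {s | 0 < y s}) := by
  rw [isOpen_iff_mem_nhds]
  rintro x ⟨hxI, hxy⟩
  have hx0 : 0 < x := lt_of_le_of_lt hα hxI.1
  have hcont : ContinuousAt y x := hsol.1.continuousAt (Ici_mem_nhds hx0)
  have h1 : ∀ᶠ s in 𝓝 x, 0 < y s := hcont.eventually (eventually_gt_nhds hxy)
  have h2 : Ioo α β ∈ 𝓝 x := isOpen_Ioo.mem_nhds hxI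
  filter_upwards [h1, h2] with s hs1 hs2
  exact ⟨hs2, hs1⟩

lemma component_integral_zero (ha : LocIntOn a) (hsol : IsSol a y₀ y) {α β : ℝ}
    (hα : 0 ≤ α) (hyα : y α = 0) (hyβ : y β = 0) {x : ℝ}
    (hx : x ∈ Ioo α β ∩ {s | 0 < y s}) :
    ∫ s in connectedComponentIn (Ioo α β ∩ {s | 0 < y s}) x, a s = 0 := by
  set V := Ioo α β ∩ {s | 0 < y s} with hVdef
  have hVopen : IsOpen V := openV hsol hα
  set K := connectedComponentIn V x with hKdef
  have hKopen : IsOpen K := hVopen.connectedComponentIn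
  have hKV : K ⊆ V := connectedComponentIn_subset V x
  have hxK : x ∈ K := mem_connectedComponentIn hx
  have hKne : K.Nonempty := ⟨x, hxK⟩
  have hbdd : BddBelow K ∧ BddAbove K :=
    ⟨⟨α, fun k hk => (hKV hk).1.1.le⟩, ⟨β, fun k hk => (hKV hk).1.2.le⟩⟩
  set p := sInf K with hpdef
  set q := sSup K with hqdef
  have hαp : α ≤ p := le_csInf hKne (fun k hk => (hKV hk).1.1.le)
  have hqβ : q ≤ β := csSup_le hKne (fun k hk => (hKV hk).1.2.le)
  have hpnotK : p ∉ K := by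
    intro hpK
    obtain ⟨ε, hε, hball⟩ := Metric.isOpen_iff.1 hKopen p hpK
    have hm : p - ε / 2 ∈ K := by
      apply hball
      rw [Metric.mem_ball, Real.dist_eq, show p - ε / 2 - p = -(ε / 2) by ring,
        abs_neg, abs_of_pos (by linarith)]
      linarith
    have := csInf_le hbdd.1 hm
    simp only [← hpdef] at this
    linarith
  have hqnotK : q ∉ K := by
    intro hqK
    obtain ⟨ε, hε, hball⟩ := Metric.isOpen_iff.1 hKopen q hqK
    have hm : q + ε / 2 ∈ K := by
      apply hball
      rw [Metric.mem_ball, Real.dist_eq, show q + ε / 2 - q = ε / 2 by ring,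
        abs_of_pos (by linarith)]
      linarith
    have := le_csSup hbdd.2 hm
    simp only [← hqdef] at this
    linarith
  have hKIoo : K = Ioo p q := by
    apply Subset.antisymm
    · intro k hk
      rcases lt_or_eq_of_le (csInf_le hbdd.1 hk) with h1 | h1
      · rcases lt_or_eq_of_le (le_csSup hbdd.2 hk) with h2 | h2
        · exact ⟨h1, h2⟩
        · exact absurd hk (by rw [h2]; exact hqnotK)
      · exact absurd hk (by rw [← h1]; exact hpnotK)
    · intro z hz
      obtain ⟨x₁, hx₁K, hx₁⟩ := exists_lt_of_csInf_lt hKne hz.1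
      obtain ⟨x₂, hx₂K, hx₂⟩ := exists_lt_of_lt_csSup hKne hz.2
      exact (isPreconnected_connectedComponentIn.ordConnected).out hx₁K hx₂K
        ⟨hx₁.le, hx₂.le⟩
  have hpq : p < q := by
    have := hKIoo ▸ hxK
    exact lt_trans this.1 this.2
  -- y vanishes at endpoints p and q
  have hyp : y p = 0 := by
    by_contra hne
    have hp0 : 0 ≤ p := hα.trans hαp
    have hppos : 0 < y p := lt_of_le_of_ne (hsol.2.1 p hp0) (Ne.symm hne)
    have hpα : α < p := by
      rcases lt_or_eq_of_le hαp with h | h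
      · exact h
      · rw [← h, hyα] at hppos; exact absurd hppos (lt_irrefl 0)
    have hpβ : p < β := lt_of_lt_of_le hpq hqβ
    have hpV : p ∈ V := ⟨⟨hpα, hpβ⟩, hppos⟩
    have hK' : connectedComponentIn V p ∈ 𝓝 p :=
      connectedComponentIn_mem_nhds (hVopen.mem_nhds hpV)
    obtain ⟨ε, hε, hball⟩ := Metric.mem_nhds_iff.1 hK'
    set z := p + min (ε / 2) ((q - p) / 2) with hzdef
    have hmin0 : (0:ℝ) < min (ε / 2) ((q - p) / 2) := lt_min (by linarith) (by linarith)
    have hz1 : z ∈ connectedComponentIn V p := by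
      apply hball
      rw [Metric.mem_ball, Real.dist_eq, hzdef,
        show p + min (ε / 2) ((q - p) / 2) - p = min (ε / 2) ((q - p) / 2) by ring,
        abs_of_pos hmin0]
      exact lt_of_le_of_lt (min_le_left _ _) (by linarith)
    have hz2 : z ∈ K := by
      rw [hKIoo]
      constructor
      · simp only [hzdef]
        linarith [hmin0]
      · simp only [hzdef]
        have := min_le_right (ε / 2) ((q - p) / 2)
        linarith
    have hKz : K = connectedComponentIn V z := connectedComponentIn_eq hz2
    have hK'z : connectedComponentIn V p = connectedComponentIn V z :=
      connectedComponentIn_eq hz1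
    have : p ∈ K := by
      rw [hKz, ← hK'z]
      exact mem_connectedComponentIn hpV
    exact hpnotK this
  have hyq : y q = 0 := by
    by_contra hne
    have hq0 : 0 ≤ q := hα.trans (hαp.trans hpq.le)
    have hqpos : 0 < y q := lt_of_le_of_ne (hsol.2.1 q hq0) (Ne.symm hne)
    have hqβ' : q < β := by
      rcases lt_or_eq_of_le hqβ with h | h
      · exact h
      · rw [h, hyβ] at hqpos; exact absurd hqpos (lt_irrefl 0)
    have hαq : α < q := lt_of_le_of_lt hαp hpq
    have hqV : q ∈ V := ⟨⟨hαq, hqβ'⟩, hqpos⟩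
    have hK' : connectedComponentIn V q ∈ 𝓝 q :=
      connectedComponentIn_mem_nhds (hVopen.mem_nhds hqV)
    obtain ⟨ε, hε, hball⟩ := Metric.mem_nhds_iff.1 hK'
    set z := q - min (ε / 2) ((q - p) / 2) with hzdef
    have hmin0 : (0:ℝ) < min (ε / 2) ((q - p) / 2) := lt_min (by linarith) (by linarith)
    have hz1 : z ∈ connectedComponentIn V q := by
      apply hball
      rw [Metric.mem_ball, Real.dist_eq, hzdef,
        show q - min (ε / 2) ((q - p) / 2) - q = -(min (ε / 2) ((q - p) / 2)) by ring,
        abs_neg, abs_of_pos hmin0]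
      exact lt_of_le_of_lt (min_le_left _ _) (by linarith)
    have hz2 : z ∈ K := by
      rw [hKIoo]
      constructor
      · simp only [hzdef]
        have := min_le_right (ε / 2) ((q - p) / 2)
        linarith
      · simp only [hzdef]
        linarith [hmin0]
    have hKz : K = connectedComponentIn V z := connectedComponentIn_eq hz2
    have hK'z : connectedComponentIn V q = connectedComponentIn V z :=
      connectedComponentIn_eq hz1
    have : q ∈ K := by
      rw [hKz, ← hK'z]
      exact mem_connectedComponentIn hqV
    exact hqnotK this
  -- conclude
  have hp0 : 0 ≤ p := hα.trans hαp
  have hL1 := L1 ha hsol hp0 hpq.le (fun s hs => (hKV (hKIoo ▸ hs : s ∈ K)).2)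
  rw [hyp, hyq, Real.sqrt_zero, sub_zero] at hL1
  have : ∫ s in p..q, a s = 0 := by linarith
  rw [hKIoo]
  rw [← MeasureTheory.integral_Ioc_eq_integral_Ioo, ← intervalIntegral.integral_of_le hpq.le]
  exact this

lemma L4 (ha : LocIntOn a) (hsol : IsSol a y₀ y) {α β : ℝ} (hα : 0 ≤ α) (hαβ : α ≤ β)
    (hyα : y α = 0) (hyβ : y β = 0) :
    ∫ s in Ioo α β ∩ {s | 0 < y s}, a s = 0 := by
  set V := Ioo α β ∩ {s | 0 < y s} with hVdef
  have hVopen : IsOpen V := openV hsol hα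
  set T : Set (Set ℝ) := (fun x => connectedComponentIn V x) '' V with hTdef
  have hdisj : ∀ K ∈ T, ∀ K' ∈ T, K ≠ K' → Disjoint K K' := by
    rintro K ⟨xK, hxK, rfl⟩ K' ⟨xK', hxK', rfl⟩ hne
    rw [Set.disjoint_left]
    intro z hz hz'
    exact hne ((connectedComponentIn_eq hz).trans (connectedComponentIn_eq hz').symm)
  have hTopen : ∀ K ∈ T, IsOpen K := by
    rintro K ⟨xK, hxK, rfl⟩; exact hVopen.connectedComponentIn
  have hTne : ∀ K ∈ T, K.Nonempty := by
    rintro K ⟨xK, hxK, rfl⟩; exact ⟨xK, mem_connectedComponentIn hxK⟩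
  have hTcount : T.Countable := by
    apply Set.PairwiseDisjoint.countable_of_isOpen (s := fun K : Set ℝ => K) (a := T)
    · exact hdisj
    · exact hTopen
    · exact hTne
  have hunion : ⋃₀ T = V := by
    apply Subset.antisymm
    · rintro z ⟨K, ⟨xK, hxK, rfl⟩, hzK⟩; exact connectedComponentIn_subset V xK hzK
    · intro z hz; exact ⟨connectedComponentIn V z, ⟨z, hz, rfl⟩, mem_connectedComponentIn hz⟩
  haveI := hTcount.to_subtype
  have hint : IntegrableOn a V volume := by
    apply (ha β (hα.trans hαβ)).mono_set
    intro s hs; exact ⟨hα.trans hs.1.1.le, hs.1.2.le⟩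
  have heq : ∫ s in V, a s = ∑' (K : T), ∫ s in (K : Set ℝ), a s := by
    rw [← hunion, sUnion_eq_iUnion]
    apply integral_iUnion
    · exact fun K => (hTopen K K.2).measurableSet
    · intro K K' hne
      exact hdisj K K.2 K' K'.2 (fun h => hne (Subtype.coe_injective h))
    · rwa [← sUnion_eq_iUnion, hunion]
  rw [heq]
  have hzero : ∀ K : T, ∫ s in (K : Set ℝ), a s = 0 := by
    rintro ⟨K, xK, hxK, rfl⟩
    exact component_integral_zero ha hsol hα hyα hyβ hxK
  simp only [hzero, tsum_zero]

lemma openW (hsol : IsSol a y₀ y) : IsOpen {s : ℝ | 0 < s ∧ 0 < y s} := by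
  rw [isOpen_iff_mem_nhds]
  rintro x ⟨hx0, hxy⟩
  have hcont : ContinuousAt y x := hsol.1.continuousAt (Ici_mem_nhds hx0)
  have h1 : ∀ᶠ s in 𝓝 x, 0 < y s := hcont.eventually (eventually_gt_nhds hxy)
  have h2 : ∀ᶠ s in 𝓝 x, 0 < s := eventually_gt_nhds hx0
  filter_upwards [h1, h2] with s hs1 hs2
  exact ⟨hs2, hs1⟩

lemma Pmeas (hsol : IsSol a y₀ y) : MeasurableSet ({s : ℝ | 0 < y s} ∩ Ici 0) := by
  have : {s : ℝ | 0 < y s} ∩ Ici 0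
      = {s : ℝ | 0 < s ∧ 0 < y s} ∪ ({s : ℝ | 0 < y s} ∩ {0}) := by
    ext x
    simp only [mem_inter_iff, mem_setOf_eq, mem_union, mem_singleton_iff, mem_Ici]
    constructor
    · rintro ⟨h1, h2⟩
      rcases lt_or_eq_of_le h2 with h | h
      · exact Or.inl ⟨h, h1⟩
      · exact Or.inr ⟨h1, h.symm⟩
    · rintro (⟨h1, h2⟩ | ⟨h1, h2⟩)
      · exact ⟨h2, h1.le⟩
      · exact ⟨h1, h2.ge⟩
  rw [this]
  exact (openW hsol).measurableSet.union
    ((Set.Subsingleton.measurableSet (fun x hx y hy => hx.2.trans hy.2.symm)))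

lemma astar_eq_indicator (hsol : IsSol a y₀ y) {astar : ℝ → ℝ}
    (hastar : ∀ s : ℝ, astar s = if 0 < y s then a s else 0) :
    ∀ s ∈ Ici (0:ℝ), astar s = Set.indicator ({s : ℝ | 0 < y s} ∩ Ici 0) a s := by
  intro s hs
  rw [hastar s]
  by_cases h : 0 < y s
  · have hmem : s ∈ {s : ℝ | 0 < y s} ∩ Ici 0 := ⟨h, hs⟩
    rw [if_pos h, Set.indicator_of_mem hmem]
  · rw [if_neg h, Set.indicator_of_notMem (fun hc => h hc.1)]

lemma astar_intOn (ha : LocIntOn a) (hsol : IsSol a y₀ y) {astar : ℝ → ℝ}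
    (hastar : ∀ s : ℝ, astar s = if 0 < y s then a s else 0)
    {T : ℝ} (hT : 0 ≤ T) : IntegrableOn astar (Icc 0 T) volume := by
  have hind : IntegrableOn (Set.indicator ({s : ℝ | 0 < y s} ∩ Ici 0) a) (Icc 0 T) volume :=
    (ha T hT).indicator (Pmeas hsol)
  apply hind.congr_fun ?_ measurableSet_Icc
  intro s hs
  exact (astar_eq_indicator hsol hastar s hs.1).symm

lemma astar_intervalInt (ha : LocIntOn a) (hsol : IsSol a y₀ y) {astar : ℝ → ℝ}
    (hastar : ∀ s : ℝ, astar s = if 0 < y s then a s else 0)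
    {u v : ℝ} (hu : 0 ≤ u) (huv : u ≤ v) : IntervalIntegrable astar volume u v := by
  rw [intervalIntegrable_iff_integrableOn_Ioc_of_le huv]
  exact (astar_intOn ha hsol hastar (hu.trans huv)).mono_set
    (Ioc_subset_Icc_self.trans (Icc_subset_Icc_left hu))

lemma L3' (ha : LocIntOn a) (hsol : IsSol a y₀ y) {astar : ℝ → ℝ}
    (hastar : ∀ s : ℝ, astar s = if 0 < y s then a s else 0)
    {u v : ℝ} (hu : 0 ≤ u) (huv : u ≤ v) :
    Real.sqrt (y v) - Real.sqrt (y u) = - ∫ s in u..v, astar s := by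
  set Z := Icc u v ∩ y ⁻¹' {0} with hZdef
  have hZclosed : IsClosed Z :=
    (hsol.1.mono (fun s hs => hu.trans hs.1)).preimage_isClosed_of_isClosed
      isClosed_Icc isClosed_singleton
  have hZcomp : IsCompact Z :=
    isCompact_Icc.of_isClosed_subset hZclosed inter_subset_left
  rcases eq_empty_or_nonempty Z with hZe | hZne
  · -- y > 0 on all of Icc u v
    have hpos : ∀ s ∈ Icc u v, 0 < y s := by
      intro s hs
      rcases lt_or_eq_of_le (hsol.2.1 s (hu.trans hs.1)) with h | h
      · exact h
      · exfalso
        have hsZ : s ∈ Z := ⟨hs, h.symm⟩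
        rw [hZe] at hsZ
        exact notMem_empty s hsZ
    have h1 := core ha hsol hu huv hpos
    rw [h1]
    congr 1
    apply intervalIntegral.integral_congr
    intro s hs
    rw [uIcc_of_le huv] at hs
    rw [hastar s, if_pos (hpos s hs)]
  · set α := sInf Z with hαdef
    set β := sSup Z with hβdef
    have hαZ : α ∈ Z := hZcomp.sInf_mem hZne
    have hβZ : β ∈ Z := hZcomp.sSup_mem hZne
    have hyα : y α = 0 := hαZ.2
    have hyβ : y β = 0 := hβZ.2
    have huα : u ≤ α := hαZ.1.1
    have hβv : β ≤ v := hβZ.1.2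
    have hαβ : α ≤ β := csInf_le_csSup hZne hZcomp.bddBelow hZcomp.bddAbove
    have hα0 : 0 ≤ α := hu.trans huα
    have hposuα : ∀ s ∈ Ioo u α, 0 < y s := by
      intro s hs
      rcases lt_or_eq_of_le (hsol.2.1 s (hu.trans hs.1.le)) with h | h
      · exact h
      · exfalso
        have hsZ : s ∈ Z := ⟨⟨hs.1.le, hs.2.le.trans (hαβ.trans hβv)⟩, h.symm⟩
        have := csInf_le hZcomp.bddBelow hsZ
        rw [← hαdef] at this
        linarith [hs.2]
    have hposβv : ∀ s ∈ Ioc β v, 0 < y s := by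
      intro s hs
      rcases lt_or_eq_of_le (hsol.2.1 s (hu.trans ((huα.trans hαβ).trans hs.1.le))) with h | h
      · exact h
      · exfalso
        have hsZ : s ∈ Z := ⟨⟨(huα.trans hαβ).trans hs.1.le, hs.2⟩, h.symm⟩
        have := le_csSup hZcomp.bddAbove hsZ
        rw [← hβdef] at this
        linarith [hs.1]
    have hae_ne : ∀ c : ℝ, ∀ᵐ s : ℝ ∂volume, s ≠ c := by
      intro c
      rw [ae_iff]
      simpa using Real.volume_singleton
    -- piece 1
    have hp1 : Real.sqrt (y α) - Real.sqrt (y u) = - ∫ s in u..α, astar s := by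
      rw [L1 ha hsol hu huα hposuα]
      congr 1
      apply intervalIntegral.integral_congr_ae
      filter_upwards [hae_ne α] with s hs hsI
      rw [uIoc_of_le huα] at hsI
      rw [hastar s, if_pos (hposuα s ⟨hsI.1, lt_of_le_of_ne hsI.2 hs⟩)]
    -- piece 3
    have hp3 : Real.sqrt (y v) - Real.sqrt (y β) = - ∫ s in β..v, astar s := by
      rw [L1 ha hsol (hu.trans (huα.trans hαβ)) hβv
        (fun s hs => hposβv s (Ioo_subset_Ioc_self hs))]
      congr 1
      apply intervalIntegral.integral_congr_ae
      apply ae_of_all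
      intro s hsI
      rw [uIoc_of_le hβv] at hsI
      rw [hastar s, if_pos (hposβv s hsI)]
    -- piece 2
    have hp2 : (∫ s in α..β, astar s) = 0 := by
      rw [intervalIntegral.integral_of_le hαβ]
      have e1 : ∫ s in Ioc α β, astar s
          = ∫ s in Ioc α β, Set.indicator ({s : ℝ | 0 < y s} ∩ Ici 0) a s := by
        apply setIntegral_congr_fun measurableSet_Ioc
        intro s hs
        exact astar_eq_indicator hsol hastar s (hα0.trans hs.1.le)
      rw [e1, setIntegral_indicator (Pmeas hsol)]
      have e2 : Ioc α β ∩ ({s : ℝ | 0 < y s} ∩ Ici 0) = Ioo α β ∩ {s | 0 < y s} := by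
        ext s
        simp only [mem_inter_iff, mem_Ioc, mem_Ioo, mem_setOf_eq, mem_Ici]
        constructor
        · rintro ⟨⟨h1, h2⟩, h3, _⟩
          rcases lt_or_eq_of_le h2 with h | h
          · exact ⟨⟨h1, h⟩, h3⟩
          · rw [h] at h3; rw [hyβ] at h3; exact absurd h3 (lt_irrefl 0)
        · rintro ⟨⟨h1, h2⟩, h3⟩
          exact ⟨⟨h1, h2.le⟩, h3, hα0.trans h1.le⟩
      rw [e2]
      exact L4 ha hsol hα0 hαβ hyα hyβ
    have hadd1 : (∫ s in u..α, astar s) + (∫ s in α..β, astar s) = ∫ s in u..β, astar s :=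
      intervalIntegral.integral_add_adjacent_intervals
        (astar_intervalInt ha hsol hastar hu huα)
        (astar_intervalInt ha hsol hastar hα0 hαβ)
    have hadd2 : (∫ s in u..β, astar s) + (∫ s in β..v, astar s) = ∫ s in u..v, astar s :=
      intervalIntegral.integral_add_adjacent_intervals
        (astar_intervalInt ha hsol hastar hu (huα.trans hαβ))
        (astar_intervalInt ha hsol hastar (hu.trans (huα.trans hαβ)) hβv)
    rw [hyα] at hp1
    rw [hyβ] at hp3
    rw [Real.sqrt_zero] at hp1 hp3
    linarith

lemma w0 (hsol : IsSol a y₀ y) : Real.sqrt (y 0) = Real.sqrt y₀ := by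
  have := hsol.2.2 0 le_rfl
  rw [intervalIntegral.integral_same] at this
  rw [this]; ring_nf

lemma L3 (ha : LocIntOn a) (hsol : IsSol a y₀ y) {astar : ℝ → ℝ}
    (hastar : ∀ s : ℝ, astar s = if 0 < y s then a s else 0)
    {t : ℝ} (ht : 0 ≤ t) :
    Real.sqrt (y t) = Real.sqrt y₀ - ∫ s in (0:ℝ)..t, astar s := by
  have := L3' ha hsol hastar le_rfl ht
  rw [w0 hsol] at this
  linarith

lemma abs_eq_add_two_negpart (r : ℝ) : |r| = r + 2 * max (-r) 0 := by
  rcases le_total 0 r with h | h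
  · rw [abs_of_nonneg h, max_eq_right (neg_nonpos.2 h)]; ring
  · rw [abs_of_nonpos h, max_eq_left (neg_nonneg.2 h)]; ring

lemma negpart_intOn (ha : LocIntOn a) (hsol : IsSol a y₀ y) {astar : ℝ → ℝ}
    (hastar : ∀ s : ℝ, astar s = if 0 < y s then a s else 0)
    {T : ℝ} (hT : 0 ≤ T) :
    IntegrableOn (fun s => max (-astar s) 0) (Icc 0 T) volume :=
  (astar_intOn ha hsol hastar hT).neg_part

lemma real_bound (ha : LocIntOn a) (hy₀ : 0 ≤ y₀) (hsol : IsSol a y₀ y)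
    (haneg : IntegrableOn (fun s => max (-a s) 0) (Ici 0) volume)
    {astar : ℝ → ℝ} (hastar : ∀ s : ℝ, astar s = if 0 < y s then a s else 0)
    {T : ℝ} (hT : 0 ≤ T) :
    ∫ s in Icc 0 T, |astar s| ≤ Real.sqrt y₀ + 2 * ∫ s in Ici (0:ℝ), max (-a s) 0 := by
  have I1 : IntegrableOn astar (Icc 0 T) volume := astar_intOn ha hsol hastar hT
  have I2 : IntegrableOn (fun s => max (-astar s) 0) (Icc 0 T) volume :=
    negpart_intOn ha hsol hastar hT
  have I3 : IntegrableOn (fun s => max (-a s) 0) (Icc 0 T) volume :=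
    haneg.mono_set Icc_subset_Ici_self
  have e1 : ∫ s in Icc 0 T, |astar s|
      = (∫ s in Icc 0 T, astar s) + 2 * ∫ s in Icc 0 T, max (-astar s) 0 := by
    rw [show (2 : ℝ) * ∫ s in Icc 0 T, max (-astar s) 0
        = ∫ s in Icc 0 T, 2 * max (-astar s) 0 by rw [integral_const_mul],
      ← integral_add I1 (I2.const_mul 2)]
    apply setIntegral_congr_fun measurableSet_Icc
    intro s _
    exact abs_eq_add_two_negpart (astar s)
  have b1 : (∫ s in Icc 0 T, astar s) ≤ Real.sqrt y₀ := by
    rw [integral_Icc_eq_integral_Ioc, ← intervalIntegral.integral_of_le hT]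
    have := L3 ha hsol hastar hT
    have h2 := Real.sqrt_nonneg (y T)
    linarith
  have b2 : (∫ s in Icc 0 T, max (-astar s) 0) ≤ ∫ s in Icc 0 T, max (-a s) 0 := by
    apply setIntegral_mono_on I2 I3 measurableSet_Icc
    intro s _
    rw [hastar s]
    by_cases h : 0 < y s
    · rw [if_pos h]
    · rw [if_neg h]
      simp only [neg_zero, max_self]
      exact le_max_right _ _
  have b3 : (∫ s in Icc 0 T, max (-a s) 0) ≤ ∫ s in Ici (0:ℝ), max (-a s) 0 := by
    apply setIntegral_mono_set haneg
    · apply ae_of_all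
      intro s
      exact le_max_right _ _
    · exact HasSubset.Subset.eventuallyLE Icc_subset_Ici_self
  linarith

end Stmt12Aux

theorem stmt12 (a : ℝ → ℝ) (y₀ : ℝ) (ha : LocIntOn a) (hy₀ : 0 ≤ y₀)
    (haneg : MeasureTheory.IntegrableOn (fun s => max (-a s) 0) (Set.Ici 0)
      MeasureTheory.volume)
    (y : ℝ → ℝ) (hy : IsMaxSol a y₀ y)
    (astar : ℝ → ℝ) (hastar : ∀ s : ℝ, astar s = if 0 < y s then a s else 0) :
    (∫⁻ s in Set.Ici (0:ℝ), ENNReal.ofReal |astar s| ≤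
      ENNReal.ofReal (Real.sqrt y₀ + 2 * ∫ s in Set.Ici (0:ℝ), max (-a s) 0)) ∧
    BoundedVariationOn (fun t => Real.sqrt (y t)) (Set.Ici 0) := by
  obtain ⟨hsol, -⟩ := hy
  set RHS := ENNReal.ofReal (Real.sqrt y₀ + 2 * ∫ s in Set.Ici (0:ℝ), max (-a s) 0) with hRHS
  -- a measurable a.e.-version of astar on [0, ∞)
  have hIciU : Ici (0:ℝ) = ⋃ n : ℕ, Icc (0:ℝ) (n:ℝ) := by
    ext x
    simp only [mem_Ici, mem_iUnion, mem_Icc]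
    constructor
    · intro hx
      obtain ⟨n, hn⟩ := exists_nat_ge x
      exact ⟨n, hx, hn⟩
    · rintro ⟨n, h1, _⟩; exact h1
  have hAESM : AEStronglyMeasurable astar (volume.restrict (Ici (0:ℝ))) := by
    rw [hIciU, aestronglyMeasurable_iUnion_iff]
    intro n
    exact (Stmt12Aux.astar_intOn ha hsol hastar (Nat.cast_nonneg n)).aestronglyMeasurable
  set g : ℝ → ℝ := hAESM.mk astar with hgdef
  have hgSM : StronglyMeasurable g := hAESM.stronglyMeasurable_mk
  have hge : astar =ᵐ[volume.restrict (Ici (0:ℝ))] g := hAESM.ae_eq_mk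
  set G : ℝ → ℝ≥0∞ := fun s => ENNReal.ofReal |g s| with hGdef
  have hGmeas : Measurable G := ENNReal.measurable_ofReal.comp hgSM.measurable.abs
  have hGcongr : (fun s => ENNReal.ofReal |astar s|) =ᵐ[volume.restrict (Ici (0:ℝ))] G :=
    hge.mono fun s hs => by rw [hGdef]; simp only [hs]
  have hGsub : ∀ u : Set ℝ, u ⊆ Ici (0:ℝ) → MeasurableSet u →
      ∫⁻ s in u, ENNReal.ofReal |astar s| = ∫⁻ s in u, G s := by
    intro u hsub hmeas
    apply lintegral_congr_ae
    exact ae_restrict_of_ae_restrict_of_subset hsub hGcongr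
  -- bound on each compact interval
  have hIcc : ∀ n : ℕ, ∫⁻ s in Icc (0:ℝ) (n:ℝ), G s ≤ RHS := by
    intro n
    rw [← hGsub _ Icc_subset_Ici_self measurableSet_Icc]
    have hint : Integrable (fun s => |astar s|) (volume.restrict (Icc (0:ℝ) (n:ℝ))) :=
      (Stmt12Aux.astar_intOn ha hsol hastar (Nat.cast_nonneg n)).abs
    rw [← ofReal_integral_eq_lintegral_ofReal hint (ae_of_all _ fun s => abs_nonneg _)]
    exact ENNReal.ofReal_le_ofReal
      (Stmt12Aux.real_bound ha hy₀ hsol haneg hastar (Nat.cast_nonneg n))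
  -- supremum over n
  have hsup : ∫⁻ s in Ici (0:ℝ), G s = ⨆ n : ℕ, ∫⁻ s in Icc (0:ℝ) (n:ℝ), G s := by
    rw [← lintegral_indicator measurableSet_Ici]
    have hind : (Ici (0:ℝ)).indicator G
        = fun x => ⨆ n : ℕ, (Icc (0:ℝ) (n:ℝ)).indicator G x := by
      funext x
      by_cases hx : x ∈ Ici (0:ℝ)
      · rw [Set.indicator_of_mem hx]
        apply le_antisymm
        · obtain ⟨n, hn⟩ := exists_nat_ge x
          apply le_iSup_of_le n
          have hmem : x ∈ Icc (0:ℝ) (n:ℝ) := ⟨hx, hn⟩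
          rw [Set.indicator_of_mem hmem]
        · apply iSup_le
          intro n
          exact Set.indicator_le_self _ _ x
      · rw [Set.indicator_of_notMem hx]
        symm
        simp only [ENNReal.iSup_eq_zero]
        intro n
        rw [Set.indicator_of_notMem (fun hc => hx hc.1)]
    rw [hind, lintegral_iSup]
    · congr 1
      funext n
      rw [lintegral_indicator measurableSet_Icc]
    · exact fun n => hGmeas.indicator measurableSet_Icc
    · intro n m hnm
      exact Set.indicator_le_indicator_of_subset
        (Icc_subset_Icc_right (Nat.cast_le.2 hnm)) (fun x => zero_le)
  have part1 : ∫⁻ s in Set.Ici (0:ℝ), ENNReal.ofReal |astar s| ≤ RHS := by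
    rw [hGsub _ (subset_refl _) measurableSet_Ici, hsup]
    exact iSup_le hIcc
  refine ⟨part1, ?_⟩
  -- bounded variation
  have hRHSlt : RHS < ⊤ := ENNReal.ofReal_lt_top
  rw [BoundedVariationOn]
  apply ne_top_of_le_ne_top (lt_of_le_of_lt part1 hRHSlt).ne
  set ν : Measure ℝ := volume.withDensity G with hνdef
  apply iSup_le
  rintro ⟨n, u, hu, hus⟩
  have key : ∀ i : ℕ, edist (Real.sqrt (y (u (i+1)))) (Real.sqrt (y (u i)))
      ≤ ν (Ioc (u i) (u (i+1))) := by
    intro i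
    have hui : 0 ≤ u i := hus i
    have huii : u i ≤ u (i+1) := hu (Nat.le_succ i)
    have hdiff := Stmt12Aux.L3' ha hsol hastar hui huii
    rw [edist_dist, Real.dist_eq, hdiff, abs_neg, intervalIntegral.integral_of_le huii]
    have hint : Integrable astar (volume.restrict (Ioc (u i) (u (i+1)))) :=
      (Stmt12Aux.astar_intOn ha hsol hastar (hui.trans huii)).mono_set
        (Ioc_subset_Icc_self.trans (Icc_subset_Icc_left hui))
    calc ENNReal.ofReal |∫ s in Ioc (u i) (u (i+1)), astar s|
        ≤ ENNReal.ofReal (∫ s in Ioc (u i) (u (i+1)), |astar s|) := by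
          apply ENNReal.ofReal_le_ofReal
          rw [← Real.norm_eq_abs]
          exact (norm_integral_le_integral_norm _).trans (le_of_eq (by simp [Real.norm_eq_abs]))
      _ = ∫⁻ s in Ioc (u i) (u (i+1)), ENNReal.ofReal |astar s| :=
          ofReal_integral_eq_lintegral_ofReal hint.abs (ae_of_all _ fun s => abs_nonneg _)
      _ = ∫⁻ s in Ioc (u i) (u (i+1)), G s :=
          hGsub _ (fun s hs => hui.trans hs.1.le) measurableSet_Ioc
      _ = ν (Ioc (u i) (u (i+1))) := (withDensity_apply G measurableSet_Ioc).symm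
  calc ∑ i ∈ Finset.range n, edist (Real.sqrt (y (u (i+1)))) (Real.sqrt (y (u i)))
      ≤ ∑ i ∈ Finset.range n, ν (Ioc (u i) (u (i+1))) := Finset.sum_le_sum fun i _ => key i
    _ = ν (⋃ i ∈ Finset.range n, Ioc (u i) (u (i+1))) := by
        rw [measure_biUnion_finset]
        · intro i _ j _ hij
          rcases lt_or_gt_of_ne hij with h | h
          · apply Set.disjoint_left.2
            intro x hx hx'
            have h1 : x ≤ u (i+1) := hx.2
            have h2 : u j < x := hx'.1
            have h3 : u (i+1) ≤ u j := hu h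
            linarith
          · apply Set.disjoint_left.2
            intro x hx hx'
            have h1 : x ≤ u (j+1) := hx'.2
            have h2 : u i < x := hx.1
            have h3 : u (j+1) ≤ u i := hu h
            linarith
        · exact fun i _ => measurableSet_Ioc
    _ ≤ ν (Ici (0:ℝ)) := by
        apply measure_mono
        intro x hx
        simp only [mem_iUnion, exists_prop] at hx
        obtain ⟨i, _, hxi⟩ := hx
        exact (hus i).trans hxi.1.le
    _ = ∫⁻ s in Ici (0:ℝ), G s := withDensity_apply G measurableSet_Ici
    _ = ∫⁻ s in Set.Ici (0:ℝ), ENNReal.ofReal |astar s| :=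
        (hGsub _ (subset_refl _) measurableSet_Ici).symm
end
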